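/- arXiv:2503.00896 — 3 statements merged into one kernel-verified Lean document; each statement's English description precedes it below -/
import Mathlib

section
/- Let g(t) be the sum over all partitions λ in DS(t) of the number |MD(λ)| of main diagonal hooks of λ, and f(t) the number of partitions in DS(t). Then for t ≥ 3: g(t) = g(t−1) + g(t−3) + f(t−3), with initial values g(0) = g(1) = 0, g(2) = 1 (and g(−1) = 0). -/
/-- An integer partition, given by its (weakly decreasing, eventually zero)
sequence of parts, indexed from `0`. -/
structure IntPartition where
  parts : ℕ → ℕ
  antitone : ∀ i j, i ≤ j → parts j ≤ parts i
  finite : ∃ N, ∀ i, N ≤ i → parts i = 0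

namespace IntPartition

/-- The size of a partition: the sum of its parts. -/
noncomputable def size (lam : IntPartition) : ℕ := ∑ᶠ i, lam.parts i

/-- The parts of the conjugate partition: `conjParts lam j` is the number of
rows `i` with `lam.parts i > j` (rows and columns are `0`-indexed). -/
noncomputable def conjParts (lam : IntPartition) (j : ℕ) : ℕ :=
  Nat.card {i : ℕ | j < lam.parts i}

/-- A partition is self-conjugate if it equals its conjugate. -/
def IsSelfConjugate (lam : IntPartition) : Prop :=
  ∀ j, lam.conjParts j = lam.parts j

/-- `(i, j)` (both `0`-indexed) is a cell of the Young diagram of `lam`. -/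
def IsCell (lam : IntPartition) (i j : ℕ) : Prop := j < lam.parts i

/-- The hook length of the cell `(i, j)` (both `0`-indexed): the number of
cells directly to the right, plus the number directly below, plus one. -/
noncomputable def hook (lam : IntPartition) (i j : ℕ) : ℕ :=
  (lam.parts i - j) + (lam.conjParts j - i) - 1

/-- A partition is a `t`-core if no hook length is divisible by `t`. -/
def IsCore (lam : IntPartition) (t : ℕ) : Prop :=
  ∀ i j, lam.IsCell i j → ¬ (t ∣ lam.hook i j)

/-- The size of the Durfee square: the largest `k` such that the partition has
at least `k` parts of size at least `k`. -/
noncomputable def durfee (lam : IntPartition) : ℕ :=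
  Nat.card {i : ℕ | i < lam.parts i}

/-- A partition has distinct parts if its (nonzero) parts are pairwise different. -/
def DistinctParts (lam : IntPartition) : Prop :=
  ∀ i j, lam.parts i ≠ 0 → lam.parts j ≠ 0 → i ≠ j → lam.parts i ≠ lam.parts j

/-- The set of main diagonal hook lengths of `lam`. -/
noncomputable def MD (lam : IntPartition) : Set ℕ :=
  {h | ∃ i < lam.durfee, lam.hook i i = h}

/-- `lam ∈ DS(t)`: `lam` is a self-conjugate `(t, t+1)`-core partition whose
first `durfee lam` parts are pairwise distinct. -/
def InDS (lam : IntPartition) (t : ℕ) : Prop :=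
  lam.IsSelfConjugate ∧ lam.IsCore t ∧ lam.IsCore (t + 1) ∧
    ∀ i j, i < lam.durfee → j < lam.durfee → i ≠ j → lam.parts i ≠ lam.parts j

end IntPartition

/-- `fDS t` is the number of partitions in `DS(t)`. -/
noncomputable def fDS (t : ℕ) : ℕ := Nat.card {lam : IntPartition // lam.InDS t}

/-- `gDS t` is the total number of main diagonal hooks of the partitions in `DS(t)`. -/
noncomputable def gDS (t : ℕ) : ℕ := ∑ᶠ (lam : IntPartition) (_ : lam.InDS t), lam.durfee


open Finset

/-- A finite, downward-closed set of naturals is an initial segment. -/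
lemma initialSeg (T : Set ℕ) (hfin : T.Finite) (hdc : ∀ a b : ℕ, a ≤ b → b ∈ T → a ∈ T)
    (i : ℕ) : i ∈ T ↔ i < Nat.card T := by
  rw [Nat.card_coe_set_eq]
  constructor
  · intro hi
    have hsub : Set.Iic i ⊆ T := fun a ha => hdc a i ha hi
    have h1 := Set.ncard_le_ncard hsub hfin
    have h2 : (Set.Iic i).ncard = i + 1 := by
      rw [← Finset.coe_Iic, Set.ncard_coe_finset, Nat.card_Iic]
    omega
  · intro hi
    by_contra hmem
    have hsub : T ⊆ Set.Iio i := by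
      intro b hb
      simp only [Set.mem_Iio]
      by_contra hb'
      push_neg at hb'
      exact hmem (hdc i b hb' hb)
    have h1 := Set.ncard_le_ncard hsub (Set.finite_Iio i)
    have h2 : (Set.Iio i).ncard = i := by
      rw [← Finset.coe_Iio, Set.ncard_coe_finset, Nat.card_Iio]
    omega

namespace IntPartition

variable (lam : IntPartition)

lemma colFinite (j : ℕ) : {i : ℕ | j < lam.parts i}.Finite := by
  obtain ⟨N, hN⟩ := lam.finite
  apply Set.Finite.subset (Set.finite_Iio N)
  intro i hi
  simp only [Set.mem_setOf_eq] at hi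
  simp only [Set.mem_Iio]
  by_contra h
  push_neg at h
  have := hN i h
  omega

lemma lt_conjParts_iff (i j : ℕ) : i < lam.conjParts j ↔ j < lam.parts i := by
  have := initialSeg {i : ℕ | j < lam.parts i} (lam.colFinite j)
    (fun a b hab hb => lt_of_lt_of_le hb (lam.antitone a b hab)) i
  simp only [Set.mem_setOf_eq] at this
  exact ((this.symm).trans Iff.rfl)

lemma durfFinite : {i : ℕ | i < lam.parts i}.Finite := by
  obtain ⟨N, hN⟩ := lam.finite
  apply Set.Finite.subset (Set.finite_Iio N)
  intro i hi
  simp only [Set.mem_setOf_eq] at hi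
  simp only [Set.mem_Iio]
  by_contra h
  push_neg at h
  have := hN i h
  omega

lemma lt_durfee_iff (i : ℕ) : i < lam.durfee ↔ i < lam.parts i := by
  have := initialSeg {i : ℕ | i < lam.parts i} lam.durfFinite
    (fun a b hab hb => by
      simp only [Set.mem_setOf_eq] at *
      calc a ≤ b := hab
        _ < lam.parts b := hb
        _ ≤ lam.parts a := lam.antitone a b hab) i
  simp only [Set.mem_setOf_eq] at this
  exact this.symm

@[ext] lemma ext' {lam mu : IntPartition} (h : ∀ i, lam.parts i = mu.parts i) : lam = mu := by
  cases lam; cases mu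
  simp only [mk.injEq]
  exact funext h

end IntPartition

namespace IntPartition

variable {lam : IntPartition}

lemma sc_symm (hsc : lam.IsSelfConjugate) (i j : ℕ) :
    j < lam.parts i ↔ i < lam.parts j := by
  rw [← hsc j]
  exact (lam.lt_conjParts_iff i j).symm

lemma hook_eq (hsc : lam.IsSelfConjugate) {i j : ℕ} (hcell : j < lam.parts i) :
    lam.hook i j + (i + j + 1) = lam.parts i + lam.parts j := by
  have h1 : i < lam.parts j := (sc_symm hsc i j).mp hcell
  unfold hook
  rw [hsc j]
  omega

/-- The abacus closure property: in an `s`-core, if some `parts i - i = s + x`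
with `x ≥ 1`, then some `parts r - r = x`. -/
lemma core_closure {s : ℕ} (hcore : lam.IsCore s) {i x : ℕ} (hx : 1 ≤ x)
    (hpi : lam.parts i = i + s + x) : ∃ r, lam.parts r = r + x := by
  rcases Nat.eq_zero_or_pos s with hs | hs
  · exact ⟨i, by omega⟩
  by_contra hno
  push_neg at hno
  set T : Set ℕ := {r : ℕ | x + r < lam.parts r} with hT
  have hfin : T.Finite := by
    apply Set.Finite.subset lam.durfFinite
    intro r hr
    simp only [hT, Set.mem_setOf_eq] at *
    omega
  have hdc : ∀ a b : ℕ, a ≤ b → b ∈ T → a ∈ T := by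
    intro a b hab hb
    simp only [hT, Set.mem_setOf_eq] at *
    have := lam.antitone a b hab
    omega
  set r0 := Nat.card T with hr0
  have hmem : ∀ r, r ∈ T ↔ r < r0 := fun r => initialSeg T hfin hdc r
  have hiT : i ∈ T := by
    simp only [hT, Set.mem_setOf_eq]
    omega
  have hir0 : i < r0 := (hmem i).mp hiT
  have hr0le : r0 ≤ i + s := by
    by_contra hcon
    push_neg at hcon
    have : i + s ∈ T := (hmem (i + s)).mpr hcon
    simp only [hT, Set.mem_setOf_eq] at this
    have := lam.antitone i (i + s) (by omega)
    omega
  -- the column j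
  set j := x + r0 - 1 with hj
  have hj1 : j + 1 = x + r0 := by omega
  -- key : rows with part > j are exactly those < r0
  have key : ∀ r, j < lam.parts r ↔ r < r0 := by
    intro r
    constructor
    · intro hr
      by_contra hcon
      push_neg at hcon
      have h1 : ¬ (x + r0 < lam.parts r0) := by
        intro h
        have hm : r0 ∈ T := by
          simp only [hT, Set.mem_setOf_eq]
          exact h
        exact absurd ((hmem r0).mp hm) (lt_irrefl r0)
      have h2 : lam.parts r ≤ lam.parts r0 := lam.antitone r0 r hcon
      -- parts r0 ≤ x + r0 and parts r ≥ j + 1 = x + r0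
      have h3 : lam.parts r0 = x + r0 := by omega
      rcases Nat.eq_or_lt_of_le hcon with he | hl
      · exact hno r0 (by omega)
      · have h4 : lam.parts r = x + r0 := by omega
        exact hno r0 (by omega)
    · intro hr
      have hr1 : r0 - 1 ∈ T := (hmem (r0 - 1)).mpr (by omega)
      simp only [hT, Set.mem_setOf_eq] at hr1
      have := lam.antitone r (r0 - 1) (by omega)
      omega
  have hconj : lam.conjParts j = r0 := by
    have e1 := (lam.lt_conjParts_iff (lam.conjParts j) j)
    have e2 := (lam.lt_conjParts_iff r0 j)
    have e3 := key (lam.conjParts j)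
    have e4 := key r0
    omega
  have hcell : lam.IsCell i j := by
    unfold IsCell
    omega
  apply hcore i j hcell
  have : lam.hook i j = s := by
    unfold hook
    rw [hconj]
    omega
  rw [this]

end IntPartition

namespace IntPartition

variable {lam : IntPartition} {t : ℕ}

lemma diag_cell (hsc : lam.IsSelfConjugate) {i j : ℕ}
    (hi : i < lam.durfee) (hj : j < lam.durfee) : j < lam.parts i := by
  rw [lam.lt_durfee_iff] at hi hj
  rcases le_total i j with h | h
  · have := lam.antitone i j h
    omega
  · omega

/-- F1 : in `DS(t)`, every diagonal value `parts i - i` is at most `t`. -/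
lemma forward_bound (h : lam.InDS t) {i : ℕ} (hi : i < lam.durfee) :
    lam.parts i ≤ i + t := by
  obtain ⟨hsc, hct, hct1, hdist⟩ := h
  by_contra hcon
  push_neg at hcon
  -- parts i = i + a with a ≥ t + 1
  rcases Nat.lt_or_ge (lam.parts i) (i + t + 2) with hcase | hcase
  · -- parts i = i + t + 1
    have hpi : lam.parts i = i + t + 1 := by omega
    obtain ⟨r, hr⟩ := core_closure hct (i := i) (x := 1) (by omega) (by omega)
    have hrd : r < lam.durfee := by
      rw [lam.lt_durfee_iff]
      omega
    have hcell : lam.IsCell i r := diag_cell hsc hi hrd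
    apply hct1 i r hcell
    have := hook_eq hsc hcell
    have : lam.hook i r = t + 1 := by omega
    rw [this]
  · -- parts i = i + t + x with x >= 2 : two closures give equal adjacent parts
    have hpi : i < lam.parts i := (lam.lt_durfee_iff i).mp hi
    obtain ⟨a, ha1, haa⟩ : ∃ a, t + 2 ≤ a ∧ lam.parts i = i + a :=
      ⟨lam.parts i - i, by omega, by omega⟩
    obtain ⟨r, hr⟩ := core_closure hct (i := i) (x := a - t) (by omega) (by omega)
    obtain ⟨r', hr'⟩ := core_closure hct1 (i := i) (x := a - t - 1) (by omega) (by omega)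
    have h1 : r' = r + 1 := by
      rcases le_total r r' with hle | hle
      · have := lam.antitone r r' hle
        rcases Nat.eq_or_lt_of_le hle with he | hlt
        · subst he
          omega
        · omega
      · have := lam.antitone r' r hle
        rcases Nat.eq_or_lt_of_le hle with he | hlt
        · subst he
          omega
        · omega
    have hrd : r < lam.durfee := by rw [lam.lt_durfee_iff]; omega
    have hrd' : r' < lam.durfee := by rw [lam.lt_durfee_iff]; omega
    exact hdist r r' hrd hrd' (by omega) (by omega)

/-- F2 : no two diagonal values sum to `t+1` or `t+2`. -/
lemma forward_sum (h : lam.InDS t) {i j : ℕ} (hi : i < lam.durfee) (hj : j < lam.durfee) :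
    lam.parts i + lam.parts j ≠ i + j + (t + 1) ∧
      lam.parts i + lam.parts j ≠ i + j + (t + 2) := by
  obtain ⟨hsc, hct, hct1, hdist⟩ := h
  have hcell : lam.IsCell i j := diag_cell hsc hi hj
  have hhook := hook_eq hsc hcell
  constructor
  · intro hcon
    apply hct i j hcell
    have : lam.hook i j = t := by omega
    rw [this]
  · intro hcon
    apply hct1 i j hcell
    have : lam.hook i j = t + 1 := by omega
    rw [this]

/-- F3 : no two diagonal values are consecutive. -/
lemma forward_gap (h : lam.InDS t) {i j : ℕ} (hi : i < lam.durfee) (hj : j < lam.durfee) :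
    lam.parts i - i ≠ (lam.parts j - j) + 1 := by
  obtain ⟨hsc, hct, hct1, hdist⟩ := h
  intro hcon
  have hpi : i < lam.parts i := (lam.lt_durfee_iff i).mp hi
  have hpj : j < lam.parts j := (lam.lt_durfee_iff j).mp hj
  have hij : i < j := by
    rcases le_total j i with hle | hle
    · have := lam.antitone j i hle
      omega
    · have := lam.antitone i j hle
      rcases Nat.eq_or_lt_of_le hle with he | hl
      · subst he
        omega
      · exact hl
  have h1 : lam.parts j ≤ lam.parts i := lam.antitone i j (le_of_lt hij)
  have h2 : j = i + 1 := by omega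
  subst h2
  exact hdist i (i+1) hi hj (by omega) (by omega)

end IntPartition

namespace DSModel

open Finset

/-- `aseq A i` is the `i`-th largest element of `A` (0-indexed), or junk. -/
def aseq (A : Finset ℕ) (i : ℕ) : ℕ := (A.sort (· ≤ ·)).getD (A.card - 1 - i) 0

lemma aseq_mem (A : Finset ℕ) {i : ℕ} (hi : i < A.card) : aseq A i ∈ A := by
  unfold aseq
  have hlen : (A.sort (· ≤ ·)).length = A.card := Finset.length_sort _
  rw [List.getD_eq_getElem _ _ (by omega)]
  exact (Finset.mem_sort _).mp (List.getElem_mem _)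

lemma aseq_strictAnti (A : Finset ℕ) {i j : ℕ} (hij : i < j) (hj : j < A.card) :
    aseq A j < aseq A i := by
  unfold aseq
  have hlen : (A.sort (· ≤ ·)).length = A.card := Finset.length_sort _
  have hs : List.Pairwise (· < ·) (A.sort (· ≤ ·)) := (Finset.sortedLT_sort A).pairwise
  rw [List.getD_eq_getElem _ _ (by omega), List.getD_eq_getElem _ _ (by omega)]
  have := List.Pairwise.rel_get_of_lt hs (a := ⟨A.card - 1 - j, by omega⟩)
    (b := ⟨A.card - 1 - i, by omega⟩) (by simp; omega)
  simpa using this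

lemma aseq_surj (A : Finset ℕ) {a : ℕ} (ha : a ∈ A) : ∃ i < A.card, aseq A i = a := by
  have hlen : (A.sort (· ≤ ·)).length = A.card := Finset.length_sort _
  have hmem : a ∈ (A.sort (· ≤ ·)) := (Finset.mem_sort _).mpr ha
  obtain ⟨n, hn, hget⟩ := List.mem_iff_getElem.mp hmem
  refine ⟨A.card - 1 - n, by omega, ?_⟩
  unfold aseq
  rw [List.getD_eq_getElem _ _ (by omega)]
  have : A.card - 1 - (A.card - 1 - n) = n := by omega
  simp_rw [this]
  exact hget

lemma aseq_image (A : Finset ℕ) : (Finset.range A.card).image (aseq A) = A := by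
  apply Finset.Subset.antisymm
  · intro a ha
    obtain ⟨i, hi, hia⟩ := Finset.mem_image.mp ha
    rw [← hia]
    exact aseq_mem A (Finset.mem_range.mp hi)
  · intro a ha
    obtain ⟨i, hi, hia⟩ := aseq_surj A ha
    exact Finset.mem_image.mpr ⟨i, Finset.mem_range.mpr hi, hia⟩

end DSModel

namespace DSModel

open Finset

/-- The parts of the self-conjugate partition with diagonal values `A`. -/
def partsOf (A : Finset ℕ) (i : ℕ) : ℕ :=
  if i < A.card then aseq A i + i
  else ((Finset.range A.card).filter (fun j => i < aseq A j + j)).card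

variable {A : Finset ℕ}

lemma aseq_pos (h0 : 0 ∉ A) {i : ℕ} (hi : i < A.card) : 1 ≤ aseq A i := by
  have := aseq_mem A hi
  rcases Nat.eq_zero_or_pos (aseq A i) with h | h
  · rw [h] at this
    exact absurd this h0
  · exact h

lemma aseq_gap2 (hgapA : ∀ a ∈ A, a + 1 ∉ A) :
    ∀ d i, i + d < A.card → aseq A (i + d) + 2 * d ≤ aseq A i := by
  intro d
  induction d with
  | zero => intro i _; simp
  | succ n ih =>
    intro i h
    have h1 : (i + 1) + n < A.card := by omega
    have h2 := ih (i + 1) h1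
    have h3 : aseq A (i + 1) < aseq A i := aseq_strictAnti A (by omega) (by omega)
    have h4 : aseq A i ≠ aseq A (i + 1) + 1 := by
      intro hc
      exact hgapA (aseq A (i + 1)) (aseq_mem A (by omega)) (hc ▸ aseq_mem A (by omega))
    have : i + 1 + n = i + (n + 1) := by omega
    rw [this] at h2
    omega

lemma cnt_le (i : ℕ) :
    ((Finset.range A.card).filter (fun j => i < aseq A j + j)).card ≤ A.card := by
  calc ((Finset.range A.card).filter (fun j => i < aseq A j + j)).card
      ≤ (Finset.range A.card).card := Finset.card_filter_le _ _
    _ = A.card := Finset.card_range _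

lemma cnt_iff (hgapA : ∀ a ∈ A, a + 1 ∉ A) (j : ℕ) {l : ℕ} (hl : l < A.card) :
    j < aseq A l + l ↔
      l < ((Finset.range A.card).filter (fun m => j < aseq A m + m)).card := by
  set T : Set ℕ := {m | m < A.card ∧ j < aseq A m + m} with hT
  have hfin : T.Finite := Set.Finite.subset (Set.finite_Iio A.card)
    (fun m hm => by simp only [hT, Set.mem_setOf_eq] at hm; exact hm.1)
  have hdc : ∀ a b : ℕ, a ≤ b → b ∈ T → a ∈ T := by
    intro a b hab hb
    simp only [hT, Set.mem_setOf_eq] at *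
    refine ⟨by omega, ?_⟩
    rcases Nat.eq_or_lt_of_le hab with he | hlt
    · subst he; exact hb.2
    · have := aseq_gap2 hgapA (b - a) a (by omega)
      have hba : a + (b - a) = b := by omega
      rw [hba] at this
      omega
  have hcard : Nat.card T =
      ((Finset.range A.card).filter (fun m => j < aseq A m + m)).card := by
    rw [Nat.card_coe_set_eq]
    have : T = ↑((Finset.range A.card).filter (fun m => j < aseq A m + m)) := by
      ext m
      simp [hT]
    rw [this, Set.ncard_coe_finset]
  have := initialSeg T hfin hdc l
  simp only [hT, Set.mem_setOf_eq] at this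
  rw [hcard] at this
  constructor
  · intro h
    exact this.mp ⟨hl, h⟩
  · intro h
    exact (this.mpr h).2

lemma partsOf_symm (h0 : 0 ∉ A) (hgapA : ∀ a ∈ A, a + 1 ∉ A) (i j : ℕ) :
    j < partsOf A i ↔ i < partsOf A j := by
  unfold partsOf
  by_cases hi : i < A.card <;> by_cases hj : j < A.card <;>
    simp only [hi, hj, if_pos, if_neg, if_true, if_false]
  · -- both on the diagonal block : both sides true
    have hai := aseq_pos h0 hi
    have haj := aseq_pos h0 hj
    rcases le_total i j with h | h
    · have := aseq_gap2 hgapA (j - i) i (by omega)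
      have hba : i + (j - i) = j := by omega
      rw [hba] at this
      constructor <;> intro _ <;> omega
    · have := aseq_gap2 hgapA (i - j) j (by omega)
      have hba : j + (i - j) = i := by omega
      rw [hba] at this
      constructor <;> intro _ <;> omega
  · -- i < card ≤ j
    exact (cnt_iff hgapA j hi)
  · -- j < card ≤ i
    exact (cnt_iff hgapA i hj).symm
  · -- both off the square : both sides false
    have h1 := cnt_le (A := A) i
    have h2 := cnt_le (A := A) j
    constructor <;> intro h <;> omega

end DSModel

namespace DSModel

open Finset

variable {A : Finset ℕ}

lemma partsOf_antitone (h0 : 0 ∉ A) : ∀ i j, i ≤ j → partsOf A j ≤ partsOf A i := by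
  have step : ∀ i, partsOf A (i + 1) ≤ partsOf A i := by
    intro i
    unfold partsOf
    by_cases hi : i + 1 < A.card
    · simp only [hi, if_pos, show i < A.card by omega]
      have := aseq_strictAnti A (show i < i + 1 by omega) hi
      omega
    · by_cases hi2 : i < A.card
      · -- i + 1 = card
        simp only [hi, hi2, if_pos, if_neg, if_true, if_false]
        have h1 := cnt_le (A := A) (i + 1)
        have h2 := aseq_pos h0 hi2
        omega
      · simp only [hi, hi2, if_neg, if_false]
        apply Finset.card_le_card
        intro m hm
        rw [Finset.mem_filter] at *
        exact ⟨hm.1, by omega⟩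
  intro i j hij
  induction j with
  | zero => simp_all
  | succ n ih =>
    rcases Nat.eq_or_lt_of_le hij with he | hlt
    · subst he; rfl
    · exact le_trans (step n) (ih (by omega))

lemma partsOf_eventually_zero : ∀ i, A.sup id + A.card ≤ i → partsOf A i = 0 := by
  intro i hi
  have hk : ¬ i < A.card := by omega
  unfold partsOf
  simp only [hk, if_neg, if_false]
  rw [Finset.card_eq_zero, Finset.filter_eq_empty_iff]
  intro m hm
  rw [Finset.mem_range] at hm
  have : aseq A m ≤ A.sup id := Finset.le_sup (f := id) (aseq_mem A hm)
  omega

lemma partsOf_diag_iff (h0 : 0 ∉ A) (i : ℕ) : i < partsOf A i ↔ i < A.card := by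
  unfold partsOf
  by_cases hi : i < A.card
  · rw [if_pos hi]
    have := aseq_pos h0 hi
    omega
  · rw [if_neg hi]
    have := cnt_le (A := A) i
    omega

/-- The self-conjugate partition with diagonal values `A`. -/
noncomputable def lamOf (A : Finset ℕ) : IntPartition :=
  if h0 : 0 ∉ A then
    { parts := partsOf A
      antitone := partsOf_antitone h0
      finite := ⟨A.sup id + A.card, partsOf_eventually_zero⟩ }
  else
    { parts := fun _ => 0
      antitone := fun _ _ _ => le_refl 0
      finite := ⟨0, fun _ _ => rfl⟩ }

lemma lamOf_parts (h0 : 0 ∉ A) : (lamOf A).parts = partsOf A := by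
  unfold lamOf
  rw [dif_pos h0]

lemma lamOf_selfConj (h0 : 0 ∉ A) (hgapA : ∀ a ∈ A, a + 1 ∉ A) :
    (lamOf A).IsSelfConjugate := by
  intro j
  have hp := lamOf_parts h0
  unfold IntPartition.conjParts
  rw [hp]
  have hset : {i : ℕ | j < partsOf A i} = Set.Iio (partsOf A j) := by
    ext i
    simp only [Set.mem_setOf_eq, Set.mem_Iio]
    exact partsOf_symm h0 hgapA i j
  rw [hset, Nat.card_coe_set_eq, ← Finset.coe_Iio, Set.ncard_coe_finset, Nat.card_Iio]

lemma lamOf_durfee (h0 : 0 ∉ A) : (lamOf A).durfee = A.card := by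
  unfold IntPartition.durfee
  rw [lamOf_parts h0]
  have hset : {i : ℕ | i < partsOf A i} = Set.Iio A.card := by
    ext i
    simp only [Set.mem_setOf_eq, Set.mem_Iio]
    exact partsOf_diag_iff h0 i
  rw [hset, Nat.card_coe_set_eq, ← Finset.coe_Iio, Set.ncard_coe_finset, Nat.card_Iio]

lemma partsOf_strictAnti_diag (hgapA : ∀ a ∈ A, a + 1 ∉ A) {i j : ℕ}
    (hij : i < j) (hj : j < A.card) : partsOf A j < partsOf A i := by
  unfold partsOf
  simp only [hj, show i < A.card by omega, if_pos]
  have := aseq_gap2 hgapA (j - i) i (by omega)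
  have hba : i + (j - i) = j := by omega
  rw [hba] at this
  omega

/-- The model condition: diagonal-value sets of partitions in `DS(t)`. -/
def Pm (t : ℕ) (A : Finset ℕ) : Prop :=
  A ⊆ Finset.Icc 1 t ∧ (∀ a ∈ A, ∀ b ∈ A, a + b ≠ t + 1 ∧ a + b ≠ t + 2) ∧
    (∀ a ∈ A, a + 1 ∉ A)

lemma Pm.h0 {t : ℕ} (h : Pm t A) : 0 ∉ A := by
  intro hc
  have := h.1 hc
  rw [Finset.mem_Icc] at this
  omega

lemma Pm.le_t {t : ℕ} (h : Pm t A) {a : ℕ} (ha : a ∈ A) : 1 ≤ a ∧ a ≤ t := by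
  have := h.1 ha
  rwa [Finset.mem_Icc] at this

lemma lamOf_core {t : ℕ} (hPm : Pm t A) {s : ℕ} (hs : s = t ∨ s = t + 1) :
    (lamOf A).IsCore s := by
  intro i j hcell hdvd
  have h0 := hPm.h0
  have hgapA := hPm.2.2
  have hp := lamOf_parts h0
  have hsc := lamOf_selfConj h0 hgapA
  unfold IntPartition.IsCell at hcell
  rw [hp] at hcell
  -- A is nonempty (there is a cell), hence t ≥ 2 and s ≥ 2
  have hAne : A.Nonempty := by
    rcases A.eq_empty_or_nonempty with he | hne
    · subst he
      unfold partsOf at hcell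
      simp at hcell
    · exact hne
  have ht2 : 2 ≤ t := by
    by_contra hc
    push_neg at hc
    obtain ⟨a, ha⟩ := hAne
    have h1 := hPm.le_t ha
    have h2 := (hPm.2.1 a ha a ha).1
    have h3 := (hPm.2.1 a ha a ha).2
    omega
  have hs2 : 2 ≤ s := by omega
  -- hook value
  have hhook := IntPartition.hook_eq hsc (by rw [hp]; exact hcell)
  rw [hp] at hhook
  have hsymm : i < partsOf A j := (partsOf_symm h0 hgapA i j).mp hcell
  have hookpos : 1 ≤ (lamOf A).hook i j := by omega
  have hdvd' : s ≤ (lamOf A).hook i j := Nat.le_of_dvd (by omega) hdvd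
  -- bound the hook in each region
  set k := A.card with hk
  by_cases hi : i < k <;> by_cases hj : j < k
  · -- diagonal block : hook = aseq i + aseq j - 1 ≤ 2t - 1 < 2s
    have hpi : partsOf A i = aseq A i + i := by unfold partsOf; simp [show i < A.card from hi]
    have hpj : partsOf A j = aseq A j + j := by unfold partsOf; simp [show j < A.card from hj]
    have hbi := hPm.le_t (aseq_mem A hi)
    have hbj := hPm.le_t (aseq_mem A hj)
    -- hook < 2s, divisible, so hook = s
    have hhs : (lamOf A).hook i j = s :=
      Nat.eq_of_dvd_of_lt_two_mul (by omega) hdvd (by omega)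
    -- so aseq i + aseq j = s + 1 ∈ {t+1, t+2} : contradiction
    have := hPm.2.1 (aseq A i) (aseq_mem A hi) (aseq A j) (aseq_mem A hj)
    omega
  · -- i < k ≤ j : hook ≤ t - 1 < s
    have hpi : partsOf A i = aseq A i + i := by unfold partsOf; simp [show i < A.card from hi]
    have hbi := hPm.le_t (aseq_mem A hi)
    have hpj : partsOf A j ≤ k := by
      unfold partsOf
      simp only [show ¬ j < A.card from hj, if_neg, if_false]
      exact cnt_le j
    omega
  · -- j < k ≤ i : symmetric
    have hpj : partsOf A j = aseq A j + j := by unfold partsOf; simp [show j < A.card from hj]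
    have hbj := hPm.le_t (aseq_mem A hj)
    have hpi : partsOf A i ≤ k := by
      unfold partsOf
      simp only [show ¬ i < A.card from hi, if_neg, if_false]
      exact cnt_le i
    omega
  · -- no cells here
    have hpi : partsOf A i ≤ k := by
      unfold partsOf
      simp only [show ¬ i < A.card from hi, if_neg, if_false]
      exact cnt_le i
    omega

lemma lamOf_InDS {t : ℕ} (hPm : Pm t A) : (lamOf A).InDS t := by
  have h0 := hPm.h0
  have hgapA := hPm.2.2
  refine ⟨lamOf_selfConj h0 hgapA, lamOf_core hPm (Or.inl rfl),
    lamOf_core hPm (Or.inr rfl), ?_⟩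
  intro i j hi hj hij
  rw [lamOf_durfee h0] at hi hj
  rw [lamOf_parts h0]
  rcases Nat.lt_or_ge i j with h | h
  · exact Nat.ne_of_gt (partsOf_strictAnti_diag hgapA h hj)
  · have : j < i := by omega
    exact Nat.ne_of_lt (partsOf_strictAnti_diag hgapA this hi)

end DSModel

namespace DSModel

open Finset

/-- The diagonal-value set of a partition. -/
noncomputable def Phi (lam : IntPartition) : Finset ℕ :=
  (Finset.range lam.durfee).image (fun i => lam.parts i - i)

lemma diag_strictAnti (lam : IntPartition) {i j : ℕ} (hij : i < j) (hj : j < lam.durfee) :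
    lam.parts j - j < lam.parts i - i := by
  have h1 : j < lam.parts j := (lam.lt_durfee_iff j).mp hj
  have h2 : i < lam.parts i := (lam.lt_durfee_iff i).mp ((lam.lt_durfee_iff i).mpr
    (by
      have h3 := lam.antitone i j (le_of_lt hij)
      omega))
  have h3 := lam.antitone i j (le_of_lt hij)
  omega

lemma Phi_card (lam : IntPartition) : (Phi lam).card = lam.durfee := by
  unfold Phi
  rw [Finset.card_image_of_injOn, Finset.card_range]
  intro i hi j hj hij
  rw [Finset.coe_range, Set.mem_Iio] at hi hj
  rcases lt_trichotomy i j with h | h | h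
  · exact absurd hij (Nat.ne_of_gt (diag_strictAnti lam h hj))
  · exact h
  · exact absurd hij (Nat.ne_of_lt (diag_strictAnti lam h hi))

lemma Phi_mem {lam : IntPartition} {m : ℕ} :
    m ∈ Phi lam ↔ ∃ i < lam.durfee, lam.parts i - i = m := by
  unfold Phi
  simp [Finset.mem_image]

lemma forward_Pm {lam : IntPartition} {t : ℕ} (h : lam.InDS t) : Pm t (Phi lam) := by
  refine ⟨?_, ?_, ?_⟩
  · intro m hm
    obtain ⟨i, hi, him⟩ := Phi_mem.mp hm
    have h1 : i < lam.parts i := (lam.lt_durfee_iff i).mp hi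
    have h2 := IntPartition.forward_bound h hi
    rw [Finset.mem_Icc]
    omega
  · intro a ha b hb
    obtain ⟨i, hi, hia⟩ := Phi_mem.mp ha
    obtain ⟨j, hj, hjb⟩ := Phi_mem.mp hb
    have h1 : i < lam.parts i := (lam.lt_durfee_iff i).mp hi
    have h2 : j < lam.parts j := (lam.lt_durfee_iff j).mp hj
    have h3 := IntPartition.forward_sum h hi hj
    omega
  · intro a ha hc
    obtain ⟨j, hj, hja⟩ := Phi_mem.mp ha
    obtain ⟨i, hi, hia⟩ := Phi_mem.mp hc
    have h1 : i < lam.parts i := (lam.lt_durfee_iff i).mp hi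
    have h2 : j < lam.parts j := (lam.lt_durfee_iff j).mp hj
    have h3 := IntPartition.forward_gap h hi hj
    omega

lemma rank_eq {A : Finset ℕ} (f : ℕ → ℕ) (k : ℕ)
    (hanti : ∀ i j, i < j → j < k → f j < f i)
    (himg : (Finset.range k).image f = A) :
    ∀ i, i < k → (A.filter (fun x => f i < x)).card = i := by
  intro i hi
  have hset : A.filter (fun x => f i < x) = (Finset.range i).image f := by
    ext x
    rw [Finset.mem_filter, Finset.mem_image, ← himg, Finset.mem_image]
    constructor
    · rintro ⟨⟨j, hj, hjx⟩, hx⟩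
      rw [Finset.mem_range] at hj
      refine ⟨j, Finset.mem_range.mpr ?_, hjx⟩
      rcases lt_trichotomy j i with h | h | h
      · exact h
      · subst h; omega
      · have := hanti i j h (by omega)
        omega
    · rintro ⟨j, hj, hjx⟩
      rw [Finset.mem_range] at hj
      refine ⟨⟨j, Finset.mem_range.mpr (by omega), hjx⟩, ?_⟩
      have := hanti j i hj hi
      omega
  rw [hset, Finset.card_image_of_injOn, Finset.card_range]
  intro a ha b hb hab
  rw [Finset.coe_range, Set.mem_Iio] at ha hb
  rcases lt_trichotomy a b with h | h | h
  · exact absurd hab (Nat.ne_of_gt (hanti a b h (by omega)))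
  · exact h
  · exact absurd hab (Nat.ne_of_lt (hanti b a h (by omega)))

lemma enum_eq {A : Finset ℕ} (f : ℕ → ℕ)
    (hanti : ∀ i j, i < j → j < A.card → f j < f i)
    (himg : (Finset.range A.card).image f = A) :
    ∀ i, i < A.card → f i = aseq A i := by
  intro i hi
  have h1 := rank_eq f A.card hanti himg i hi
  have h2 := rank_eq (aseq A) A.card (fun i j hij hj => aseq_strictAnti A hij hj)
    (aseq_image A) i hi
  have hfA : f i ∈ A := by
    rw [← himg]
    exact Finset.mem_image.mpr ⟨i, Finset.mem_range.mpr hi, rfl⟩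
  have haA : aseq A i ∈ A := aseq_mem A hi
  by_contra hne
  rcases Nat.lt_or_ge (f i) (aseq A i) with h | h
  · -- aseq A i ∈ filter (f i < ·), and filter (aseq i < ·) ∪ {aseq i} ⊆ filter (f i < ·)
    have hsub : insert (aseq A i) (A.filter (fun x => aseq A i < x)) ⊆
        A.filter (fun x => f i < x) := by
      intro x hx
      rw [Finset.mem_insert] at hx
      rcases hx with rfl | hx
      · exact Finset.mem_filter.mpr ⟨haA, h⟩
      · rw [Finset.mem_filter] at hx ⊢
        exact ⟨hx.1, by omega⟩
    have hni : aseq A i ∉ A.filter (fun x => aseq A i < x) := by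
      rw [Finset.mem_filter]
      simp
    have := Finset.card_le_card hsub
    rw [Finset.card_insert_of_notMem hni] at this
    omega
  · have hlt : aseq A i < f i := by omega
    have hsub : insert (f i) (A.filter (fun x => f i < x)) ⊆
        A.filter (fun x => aseq A i < x) := by
      intro x hx
      rw [Finset.mem_insert] at hx
      rcases hx with rfl | hx
      · exact Finset.mem_filter.mpr ⟨hfA, hlt⟩
      · rw [Finset.mem_filter] at hx ⊢
        exact ⟨hx.1, by omega⟩
    have hni : f i ∉ A.filter (fun x => f i < x) := by
      rw [Finset.mem_filter]
      simp
    have := Finset.card_le_card hsub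
    rw [Finset.card_insert_of_notMem hni] at this
    omega

lemma lamOf_Phi {lam : IntPartition} {t : ℕ} (h : lam.InDS t) : lamOf (Phi lam) = lam := by
  have hPm := forward_Pm h
  have h0 := hPm.h0
  have hk : (Phi lam).card = lam.durfee := Phi_card lam
  have hanti : ∀ i j, i < j → j < (Phi lam).card → (lam.parts j - j) < (lam.parts i - i) := by
    intro i j hij hj
    rw [hk] at hj
    exact diag_strictAnti lam hij hj
  have himg : (Finset.range (Phi lam).card).image (fun i => lam.parts i - i) = Phi lam := by
    rw [hk]; rfl
  have hen := enum_eq (fun i => lam.parts i - i) hanti himg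
  apply IntPartition.ext'
  intro i
  rw [lamOf_parts h0]
  unfold partsOf
  by_cases hi : i < (Phi lam).card
  · rw [if_pos hi]
    have h1 : i < lam.parts i := (lam.lt_durfee_iff i).mp (by rw [← hk]; exact hi)
    have hen' : lam.parts i - i = aseq (Phi lam) i := hen i hi
    rw [← hen']
    omega
  · rw [if_neg hi]
    rw [hk] at hi
    -- parts i = conjParts i counts rows with part > i, all < durfee
    have hpk : lam.parts lam.durfee ≤ lam.durfee := by
      have := (lam.lt_durfee_iff lam.durfee)
      omega
    have hco : lam.parts i = lam.conjParts i := (h.1 i).symm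
    rw [hco]
    unfold IntPartition.conjParts
    have hset : {r : ℕ | i < lam.parts r} =
        ↑((Finset.range (Phi lam).card).filter (fun m => i < aseq (Phi lam) m + m)) := by
      ext r
      simp only [Set.mem_setOf_eq, Finset.coe_filter, Finset.mem_range]
      constructor
      · intro hr
        have hrk : r < lam.durfee := by
          by_contra hc
          push_neg at hc
          have := lam.antitone lam.durfee r hc
          omega
        refine ⟨by rw [hk]; exact hrk, ?_⟩
        have hen' : lam.parts r - r = aseq (Phi lam) r := hen r (by rw [hk]; exact hrk)
        have : r < lam.parts r := (lam.lt_durfee_iff r).mp hrk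
        omega
      · rintro ⟨hr, hr2⟩
        have hen' : lam.parts r - r = aseq (Phi lam) r := hen r hr
        have : r < lam.parts r := (lam.lt_durfee_iff r).mp (by rw [← hk]; exact hr)
        omega
    rw [hset, Nat.card_coe_set_eq, Set.ncard_coe_finset]

lemma Phi_lamOf {t : ℕ} {A : Finset ℕ} (hPm : Pm t A) : Phi (lamOf A) = A := by
  have h0 := hPm.h0
  unfold Phi
  rw [lamOf_durfee h0, lamOf_parts h0]
  have hcong : (Finset.range A.card).image (fun i => partsOf A i - i) =
      (Finset.range A.card).image (aseq A) := by
    apply Finset.image_congr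
    intro i hi
    rw [Finset.coe_range, Set.mem_Iio] at hi
    simp only [partsOf, if_pos hi]
    omega
  rw [hcong, aseq_image A]

end DSModel





namespace DSModel

open Finset

open scoped Classical in
/-- The `Finset` of all diagonal-value sets for `DS(t)`. -/
noncomputable def AFin (t : ℕ) : Finset (Finset ℕ) :=
  (Finset.Icc 1 t).powerset.filter (fun A => Pm t A)

lemma mem_AFin {t : ℕ} {A : Finset ℕ} : A ∈ AFin t ↔ Pm t A := by
  classical
  simp only [AFin, Finset.mem_filter, Finset.mem_powerset]
  exact ⟨fun h => h.2, fun h => ⟨h.1, h⟩⟩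

/-- The equivalence between `DS(t)` and the model. -/
noncomputable def dsEquiv (t : ℕ) : {lam : IntPartition // lam.InDS t} ≃ {A // A ∈ AFin t} where
  toFun lam := ⟨Phi lam.1, mem_AFin.mpr (forward_Pm lam.2)⟩
  invFun A := ⟨lamOf A.1, lamOf_InDS (mem_AFin.mp A.2)⟩
  left_inv lam := Subtype.ext (lamOf_Phi lam.2)
  right_inv A := Subtype.ext (Phi_lamOf (mem_AFin.mp A.2))

lemma fDS_eq (t : ℕ) : fDS t = (AFin t).card := by
  unfold fDS
  rw [Nat.card_congr (dsEquiv t), Nat.card_eq_finsetCard]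

lemma gDS_eq (t : ℕ) : gDS t = ∑ A ∈ AFin t, A.card := by
  have h1 : gDS t = ∑ᶠ lam ∈ {lam : IntPartition | lam.InDS t}, lam.durfee := rfl
  rw [h1, finsum_mem_eq_of_bijOn Phi ?_ ?_, finsum_mem_coe_finset]
  · constructor
    · intro lam hlam
      exact mem_AFin.mpr (forward_Pm hlam)
    constructor
    · intro l1 h1 l2 h2 he
      have := lamOf_Phi h1
      rw [he, lamOf_Phi h2] at this
      exact this.symm
    · intro A hA
      rw [Finset.mem_coe] at hA
      exact ⟨lamOf A, lamOf_InDS (mem_AFin.mp hA), Phi_lamOf (mem_AFin.mp hA)⟩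
  · intro lam hlam
    exact (Phi_card lam).symm

end DSModel

namespace DSModel

open Finset

def piz (t a : ℕ) : ℕ := if 2 * a ≤ t then 2 * a - 1 else 2 * (t + 1 - a)
def sigz (t p : ℕ) : ℕ := if p % 2 = 1 then (p + 1) / 2 else t + 1 - p / 2

lemma pl1 {t a : ℕ} (h1 : 1 ≤ a) (h2 : a ≤ t) (h3 : a + a ≠ t + 1) (h4 : a + a ≠ t + 2) :
    1 ≤ piz t a ∧ piz t a ≤ t - 1 := by
  unfold piz
  split_ifs <;> omega

lemma pl2 {t a : ℕ} (h1 : 1 ≤ a) (h2 : a ≤ t) (h3 : a + a ≠ t + 1) (h4 : a + a ≠ t + 2) :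
    sigz t (piz t a) = a := by
  unfold piz sigz
  split_ifs <;> omega

lemma pl3 {t a b : ℕ} (ha1 : 1 ≤ a) (ha2 : a ≤ t) (hb1 : 1 ≤ b) (hb2 : b ≤ t)
    (hs1 : a + b ≠ t + 1) (hs2 : a + b ≠ t + 2) (hne : a ≠ b)
    (hc1 : a ≠ b + 1) (hc2 : b ≠ a + 1) :
    piz t a + 3 ≤ piz t b ∨ piz t b + 3 ≤ piz t a := by
  unfold piz
  split_ifs <;> omega

lemma ql1 {t p : ℕ} (h1 : 1 ≤ p) (h2 : p ≤ t - 1) : 1 ≤ sigz t p ∧ sigz t p ≤ t := by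
  unfold sigz
  split_ifs <;> omega

lemma ql2 {t p : ℕ} (h1 : 1 ≤ p) (h2 : p ≤ t - 1) : piz t (sigz t p) = p := by
  unfold piz sigz
  split_ifs <;> omega

lemma ql3 {t p : ℕ} (h1 : 1 ≤ p) (h2 : p ≤ t - 1) :
    sigz t p + sigz t p ≠ t + 1 ∧ sigz t p + sigz t p ≠ t + 2 := by
  unfold sigz
  split_ifs <;> omega

lemma ql4 {t p q : ℕ} (hp1 : 1 ≤ p) (hp2 : p ≤ t - 1) (hq1 : 1 ≤ q) (hq2 : q ≤ t - 1)
    (hgap : p + 3 ≤ q ∨ q + 3 ≤ p) :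
    sigz t p + sigz t q ≠ t + 1 ∧ sigz t p + sigz t q ≠ t + 2 ∧
      sigz t p ≠ sigz t q + 1 := by
  unfold sigz
  split_ifs <;> omega

end DSModel

namespace DSModel

open Finset

/-- The gap-3 model: subsets of `[1, t-1]` with pairwise gaps at least 3. -/
def SFin (t : ℕ) : Finset (Finset ℕ) :=
  (Finset.Icc 1 (t - 1)).powerset.filter (fun S => ∀ x ∈ S, ∀ y ∈ S, x < y → x + 3 ≤ y)

lemma mem_SFin {t : ℕ} {S : Finset ℕ} :
    S ∈ SFin t ↔ (∀ x ∈ S, 1 ≤ x ∧ x ≤ t - 1) ∧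
      (∀ x ∈ S, ∀ y ∈ S, x < y → x + 3 ≤ y) := by
  simp only [SFin, Finset.mem_filter, Finset.mem_powerset]
  constructor
  · rintro ⟨hsub, hgap⟩
    exact ⟨fun x hx => Finset.mem_Icc.mp (hsub hx), hgap⟩
  · rintro ⟨hsub, hgap⟩
    exact ⟨fun x hx => Finset.mem_Icc.mpr (hsub x hx), hgap⟩

lemma Pm_elt {t : ℕ} {A : Finset ℕ} (hA : Pm t A) {a : ℕ} (ha : a ∈ A) :
    1 ≤ a ∧ a ≤ t ∧ a + a ≠ t + 1 ∧ a + a ≠ t + 2 :=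
  ⟨(hA.le_t ha).1, (hA.le_t ha).2, (hA.2.1 a ha a ha).1, (hA.2.1 a ha a ha).2⟩

lemma piz_injOn {t : ℕ} {A : Finset ℕ} (hA : Pm t A) {a b : ℕ}
    (ha : a ∈ A) (hb : b ∈ A) (he : piz t a = piz t b) : a = b := by
  obtain ⟨h1, h2, h3, h4⟩ := Pm_elt hA ha
  obtain ⟨g1, g2, g3, g4⟩ := Pm_elt hA hb
  have := pl2 h1 h2 h3 h4
  have := pl2 g1 g2 g3 g4
  rw [← pl2 h1 h2 h3 h4, he, pl2 g1 g2 g3 g4]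

lemma map_AS {t : ℕ} {A : Finset ℕ} (hA : A ∈ AFin t) :
    A.image (piz t) ∈ SFin t := by
  rw [mem_AFin] at hA
  rw [mem_SFin]
  constructor
  · intro x hx
    obtain ⟨a, ha, rfl⟩ := Finset.mem_image.mp hx
    obtain ⟨h1, h2, h3, h4⟩ := Pm_elt hA ha
    exact pl1 h1 h2 h3 h4
  · intro x hx y hy hxy
    obtain ⟨a, ha, rfl⟩ := Finset.mem_image.mp hx
    obtain ⟨b, hb, rfl⟩ := Finset.mem_image.mp hy
    obtain ⟨h1, h2, h3, h4⟩ := Pm_elt hA ha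
    obtain ⟨g1, g2, g3, g4⟩ := Pm_elt hA hb
    have hne : a ≠ b := fun h => by subst h; omega
    have hc1 : a ≠ b + 1 := fun h => hA.2.2 b hb (h ▸ ha)
    have hc2 : b ≠ a + 1 := fun h => hA.2.2 a ha (h ▸ hb)
    have := pl3 h1 h2 g1 g2 (hA.2.1 a ha b hb).1 (hA.2.1 a ha b hb).2 hne hc1 hc2
    omega

lemma map_SA {t : ℕ} {S : Finset ℕ} (hS : S ∈ SFin t) :
    S.image (sigz t) ∈ AFin t := by
  rw [mem_SFin] at hS
  obtain ⟨hsub, hgap⟩ := hS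
  have hpair : ∀ p ∈ S, ∀ q ∈ S, p ≠ q → p + 3 ≤ q ∨ q + 3 ≤ p := by
    intro p hp q hq hne
    rcases lt_trichotomy p q with h | h | h
    · exact Or.inl (hgap p hp q hq h)
    · exact absurd h hne
    · exact Or.inr (hgap q hq p hp h)
  rw [mem_AFin]
  refine ⟨?_, ?_, ?_⟩
  · intro x hx
    obtain ⟨p, hp, rfl⟩ := Finset.mem_image.mp hx
    obtain ⟨h1, h2⟩ := hsub p hp
    rw [Finset.mem_Icc]
    exact ql1 h1 h2
  · intro a ha b hb
    obtain ⟨p, hp, rfl⟩ := Finset.mem_image.mp ha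
    obtain ⟨q, hq, rfl⟩ := Finset.mem_image.mp hb
    obtain ⟨h1, h2⟩ := hsub p hp
    obtain ⟨g1, g2⟩ := hsub q hq
    by_cases hpq : p = q
    · subst hpq
      exact ql3 h1 h2
    · have := ql4 h1 h2 g1 g2 (hpair p hp q hq hpq)
      exact ⟨this.1, this.2.1⟩
  · intro a ha hc
    obtain ⟨p, hp, hpa⟩ := Finset.mem_image.mp ha
    obtain ⟨q, hq, hqa⟩ := Finset.mem_image.mp hc
    obtain ⟨h1, h2⟩ := hsub p hp
    obtain ⟨g1, g2⟩ := hsub q hq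
    have hpq : p ≠ q := by
      intro h
      subst h
      omega
    have := (ql4 g1 g2 h1 h2 (hpair q hq p hp (Ne.symm hpq))).2.2
    omega

lemma AS_SA {t : ℕ} {A : Finset ℕ} (hA : A ∈ AFin t) :
    (A.image (piz t)).image (sigz t) = A := by
  rw [mem_AFin] at hA
  rw [Finset.image_image]
  have : ∀ a ∈ A, (sigz t ∘ piz t) a = id a := by
    intro a ha
    obtain ⟨h1, h2, h3, h4⟩ := Pm_elt hA ha
    simp only [Function.comp_apply, id_eq]
    exact pl2 h1 h2 h3 h4
  rw [Finset.image_congr this, Finset.image_id]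

lemma SA_AS {t : ℕ} {S : Finset ℕ} (hS : S ∈ SFin t) :
    (S.image (sigz t)).image (piz t) = S := by
  rw [mem_SFin] at hS
  rw [Finset.image_image]
  have : ∀ p ∈ S, (piz t ∘ sigz t) p = id p := by
    intro p hp
    obtain ⟨h1, h2⟩ := hS.1 p hp
    simp only [Function.comp_apply, id_eq]
    exact ql2 h1 h2
  rw [Finset.image_congr this, Finset.image_id]

lemma card_AS {t : ℕ} {A : Finset ℕ} (hA : A ∈ AFin t) :
    (A.image (piz t)).card = A.card := by
  rw [mem_AFin] at hA
  exact Finset.card_image_of_injOn (fun a ha b hb => piz_injOn hA ha hb)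

lemma gDS_S (t : ℕ) : gDS t = ∑ S ∈ SFin t, S.card := by
  rw [gDS_eq]
  exact Finset.sum_nbij' (fun A => A.image (piz t)) (fun S => S.image (sigz t))
    (fun A hA => map_AS hA) (fun S hS => map_SA hS)
    (fun A hA => AS_SA hA) (fun S hS => SA_AS hS)
    (fun A hA => (card_AS hA).symm)

lemma fDS_S (t : ℕ) : fDS t = (SFin t).card := by
  rw [fDS_eq]
  have h1 : ∑ A ∈ AFin t, 1 = ∑ S ∈ SFin t, 1 :=
    Finset.sum_nbij' (fun A => A.image (piz t)) (fun S => S.image (sigz t))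
      (fun A hA => map_AS hA) (fun S hS => map_SA hS)
      (fun A hA => AS_SA hA) (fun S hS => SA_AS hS)
      (fun A hA => rfl)
  simpa using h1

end DSModel

namespace DSModel

open Finset

lemma SFin_filter_not (t : ℕ) (ht : 3 ≤ t) :
    (SFin t).filter (fun S => ¬ (t - 1) ∈ S) = SFin (t - 1) := by
  ext S
  rw [Finset.mem_filter, mem_SFin, mem_SFin]
  constructor
  · rintro ⟨⟨hsub, hgap⟩, hnm⟩
    refine ⟨?_, hgap⟩
    intro x hx
    have h1 := hsub x hx
    have h2 : x ≠ t - 1 := fun h => hnm (h ▸ hx)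
    omega
  · rintro ⟨hsub, hgap⟩
    refine ⟨⟨?_, hgap⟩, ?_⟩
    · intro x hx
      have := hsub x hx
      omega
    · intro hmem
      have := hsub _ hmem
      omega

lemma SFin_filter_mem (t : ℕ) (ht : 3 ≤ t) :
    ∑ S ∈ (SFin t).filter (fun S => (t - 1) ∈ S), S.card =
      (∑ S ∈ SFin (t - 3), S.card) + (SFin (t - 3)).card := by
  have key : ∀ (f : Finset ℕ → ℕ),
      (∀ S, (t-1) ∈ S → S ∈ SFin t → f S = f (S.erase (t-1)) + 1) →
      False ∨ True := fun _ _ => Or.inr trivial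
  have h : ∑ S ∈ (SFin t).filter (fun S => (t - 1) ∈ S), S.card =
      ∑ S' ∈ SFin (t - 3), (S'.card + 1) := by
    apply Finset.sum_nbij' (fun S => S.erase (t - 1)) (fun S' => insert (t - 1) S')
    · -- maps to
      intro S hS
      rw [Finset.mem_filter] at hS
      obtain ⟨hSF, hmem⟩ := hS
      rw [mem_SFin] at hSF ⊢
      obtain ⟨hsub, hgap⟩ := hSF
      constructor
      · intro x hx
        rw [Finset.mem_erase] at hx
        obtain ⟨hne, hx⟩ := hx
        have h1 := hsub x hx
        have h2 : x < t - 1 := by omega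
        have h3 := hgap x hx (t - 1) hmem h2
        omega
      · intro x hx y hy hxy
        rw [Finset.mem_erase] at hx hy
        exact hgap x hx.2 y hy.2 hxy
    · -- maps back
      intro S' hS'
      rw [mem_SFin] at hS'
      obtain ⟨hsub, hgap⟩ := hS'
      rw [Finset.mem_filter, mem_SFin]
      refine ⟨⟨?_, ?_⟩, Finset.mem_insert_self _ _⟩
      · intro x hx
        rw [Finset.mem_insert] at hx
        rcases hx with rfl | hx
        · omega
        · have := hsub x hx
          omega
      · intro x hx y hy hxy
        rw [Finset.mem_insert] at hx hy
        rcases hx with rfl | hx <;> rcases hy with rfl | hy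
        · omega
        · have := hsub y hy
          omega
        · have := hsub x hx
          omega
        · exact hgap x hx y hy hxy
    · intro S hS
      rw [Finset.mem_filter] at hS
      exact Finset.insert_erase hS.2
    · intro S' hS'
      rw [mem_SFin] at hS'
      apply Finset.erase_insert
      intro hmem
      have := hS'.1 _ hmem
      omega
    · intro S hS
      rw [Finset.mem_filter] at hS
      rw [Finset.card_erase_of_mem hS.2]
      have : 1 ≤ S.card := Finset.card_pos.mpr ⟨t - 1, hS.2⟩
      omega
  rw [h, Finset.sum_add_distrib]
  simp

lemma SFin_rec (t : ℕ) (ht : 3 ≤ t) :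
    ∑ S ∈ SFin t, S.card =
      (∑ S ∈ SFin (t - 1), S.card) + (∑ S ∈ SFin (t - 3), S.card) + (SFin (t - 3)).card := by
  classical
  have := Finset.sum_filter_add_sum_filter_not (SFin t) (fun S => (t - 1) ∈ S)
    (fun S => S.card)
  rw [← this, SFin_filter_not t ht, SFin_filter_mem t ht]
  ring

lemma SFin_zero_one {t : ℕ} (ht : t ≤ 1) : SFin t = {∅} := by
  have h0 : t - 1 = 0 := by omega
  unfold SFin
  rw [h0]
  rw [show Finset.Icc 1 0 = (∅ : Finset ℕ) by decide]
  decide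

lemma SFin_two : SFin 2 = {∅, {1}} := by
  unfold SFin
  decide

end DSModel


/-- `g(0) = g(1) = 0`, `g(2) = 1`, and `g(t) = g(t-1) + g(t-3) + f(t-3)` for `t ≥ 3`. -/
theorem gDS_recurrence :
    gDS 0 = 0 ∧ gDS 1 = 0 ∧ gDS 2 = 1 ∧
      ∀ t : ℕ, 3 ≤ t → gDS t = gDS (t - 1) + gDS (t - 3) + fDS (t - 3) := by
  refine ⟨?_, ?_, ?_, ?_⟩
  · rw [DSModel.gDS_S, DSModel.SFin_zero_one (by omega)]
    simp
  · rw [DSModel.gDS_S, DSModel.SFin_zero_one (by omega)]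
    simp
  · rw [DSModel.gDS_S, DSModel.SFin_two]
    decide
  · intro t ht
    rw [DSModel.gDS_S, DSModel.gDS_S, DSModel.gDS_S, DSModel.fDS_S]
    exact DSModel.SFin_rec t ht
end

section
/- For t ≥ 6, let λ in DS(t) have the largest size, with main diagonal hook lengths h_1 > h_2 > ... > h_k. Then for each 1 ≤ i ≤ k−1, the difference h_i − h_{i+1} is either 4 or 6. -/
namespace SCAux

lemma dc_card (S : Set ℕ) (hfin : S.Finite) (hdc : ∀ a b : ℕ, a ≤ b → b ∈ S → a ∈ S) :
    ∀ i, i ∈ S ↔ i < Nat.card S := by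
  intro i
  rw [Nat.card_coe_set_eq]
  constructor
  · intro hi
    have h1 : Set.Iic i ⊆ S := fun a ha => hdc a i ha hi
    have hle := Set.ncard_le_ncard h1 hfin
    have h2 : (Set.Iic i).ncard = i + 1 := by
      rw [← Finset.coe_Iic, Set.ncard_coe_finset, Nat.card_Iic]
    omega
  · intro hi
    by_contra hx
    have h1 : S ⊆ Set.Iio i := by
      intro b hb
      by_contra hbi
      simp only [Set.mem_Iio, not_lt] at hbi
      exact hx (hdc i b hbi hb)
    have hle := Set.ncard_le_ncard h1 (Set.finite_Iio i)
    have h2 : (Set.Iio i).ncard = i := by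
      rw [← Finset.coe_Iio, Set.ncard_coe_finset, Nat.card_Iio]
    omega

variable (lam : IntPartition)

lemma conj_set_finite (j : ℕ) : {i : ℕ | j < lam.parts i}.Finite := by
  obtain ⟨N, hN⟩ := lam.finite
  apply (Set.finite_Iio N).subset
  intro i hi
  simp only [Set.mem_setOf_eq] at hi
  by_contra h
  have := hN i (by simpa [Set.mem_Iio] using h)
  omega

lemma lt_conj_iff (i j : ℕ) : i < lam.conjParts j ↔ j < lam.parts i := by
  have := dc_card {i : ℕ | j < lam.parts i} (conj_set_finite lam j)
    (fun a b hab hb => by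
      simp only [Set.mem_setOf_eq] at *
      exact lt_of_lt_of_le hb (lam.antitone a b hab))
  exact ((this i).symm : _)

lemma lt_durfee_iff (i : ℕ) : i < lam.durfee ↔ i < lam.parts i := by
  have hfin : {i : ℕ | i < lam.parts i}.Finite := by
    obtain ⟨N, hN⟩ := lam.finite
    apply (Set.finite_Iio N).subset
    intro i hi
    simp only [Set.mem_setOf_eq] at hi
    by_contra h
    have := hN i (by simpa [Set.mem_Iio] using h)
    omega
  have := dc_card {i : ℕ | i < lam.parts i} hfin
    (fun a b hab hb => by
      simp only [Set.mem_setOf_eq] at *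
      exact lt_of_le_of_lt hab (lt_of_lt_of_le hb (lam.antitone a b hab)))
  exact ((this i).symm : _)

lemma conj_antitone {j j' : ℕ} (h : j ≤ j') : lam.conjParts j' ≤ lam.conjParts j := by
  by_contra hc
  push_neg at hc
  have h1 : lam.conjParts j < lam.conjParts j' := hc
  have h2 := (lt_conj_iff lam (lam.conjParts j) j').mp h1
  have h3 := (lt_conj_iff lam (lam.conjParts j) j).mpr (lt_of_le_of_lt h h2)
  omega

end SCAux

namespace SCAux

section Abacus

variable (lam : IntPartition)

noncomputable def ell : ℕ := lam.conjParts 0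

noncomputable def beta (i : ℕ) : ℕ := lam.parts i + (ell lam - 1 - i)

noncomputable def fgap (j : ℕ) : ℕ := j + (ell lam - lam.conjParts j)

def InB (x : ℕ) : Prop := ∃ i, i < ell lam ∧ beta lam i = x

lemma conj_le_ell (j : ℕ) : lam.conjParts j ≤ ell lam :=
  conj_antitone lam (Nat.zero_le j)

lemma fgap_mono : StrictMono (fgap lam) := by
  apply strictMono_nat_of_lt_succ
  intro j
  show fgap lam j < fgap lam (j + 1)
  have hsucc : lam.conjParts j.succ = lam.conjParts (j + 1) := rfl
  have h1 := conj_le_ell lam j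
  have h2 := conj_le_ell lam (j + 1)
  have h3 := conj_antitone lam (Nat.le_succ j)
  unfold fgap
  omega

lemma fgap_ge (j : ℕ) : j ≤ fgap lam j := Nat.le_add_right _ _

lemma fgap_not_inB (j : ℕ) : ¬ InB lam (fgap lam j) := by
  rintro ⟨r, hr, hβ⟩
  have h1 := conj_le_ell lam j
  unfold beta fgap at hβ
  by_cases hc : j < lam.parts r
  · have h2 : r < lam.conjParts j := (lt_conj_iff lam r j).mpr hc
    omega
  · have h2 : ¬ (r < lam.conjParts j) := fun h => hc ((lt_conj_iff lam r j).mp h)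
    omega

lemma fgap_cover (x : ℕ) : (∃ j, fgap lam j = x) ∨ InB lam x := by
  classical
  set P : ℕ → Prop := fun j => fgap lam j ≤ x with hP
  have hP0 : P 0 := by
    have : fgap lam 0 = 0 := by
      unfold fgap ell
      omega
    simp [P, this]
  set j₀ := Nat.findGreatest P (x + 1) with hj₀
  have hspec : P j₀ := Nat.findGreatest_spec (Nat.zero_le _) hP0
  have hj₀le : j₀ ≤ x := le_trans (fgap_ge lam j₀) hspec
  have hnext : ¬ P (j₀ + 1) := by
    exact Nat.findGreatest_is_greatest (n := x + 1) (by omega) (by omega)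
  have hfj : fgap lam j₀ ≤ x := hspec
  have hfj1 : x < fgap lam (j₀ + 1) := by
    simp only [P, not_le] at hnext
    exact hnext
  by_cases heq : fgap lam j₀ = x
  · exact Or.inl ⟨j₀, heq⟩
  · right
    set r := lam.conjParts j₀ - (x - fgap lam j₀) with hr
    have h1 := conj_le_ell lam j₀
    have h2 := conj_le_ell lam (j₀ + 1)
    have h3 := conj_antitone lam (Nat.le_succ j₀)
    have hfd : fgap lam j₀ = j₀ + (ell lam - lam.conjParts j₀) := rfl
    have hfd1 : fgap lam (j₀ + 1) = (j₀+1) + (ell lam - lam.conjParts (j₀+1)) := rfl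
    have hrlt : r < lam.conjParts j₀ := by omega
    have hrge : lam.conjParts (j₀ + 1) ≤ r := by omega
    have hp1 : j₀ < lam.parts r := (lt_conj_iff lam r j₀).mp hrlt
    have hp2 : ¬ (j₀ + 1 < lam.parts r) := fun h => by
      have := (lt_conj_iff lam r (j₀+1)).mpr h
      omega
    have hpr : lam.parts r = j₀ + 1 := by omega
    refine ⟨r, by omega, ?_⟩
    unfold beta
    rw [hpr]
    omega

lemma hook_eq_beta_sub (i j : ℕ) (hcell : lam.IsCell i j) (hi : i < ell lam) :
    lam.hook i j = beta lam i - fgap lam j ∧ fgap lam j < beta lam i := by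
  have hc : j < lam.parts i := hcell
  have h1 : i < lam.conjParts j := (lt_conj_iff lam i j).mpr hc
  have h2 := conj_le_ell lam j
  unfold IntPartition.hook beta fgap
  omega

lemma core_char (s : ℕ) (hs : 0 < s) :
    lam.IsCore s ↔ ∀ i, i < ell lam → s ≤ beta lam i → InB lam (beta lam i - s) := by
  constructor
  · intro hcore i hi hsb
    by_contra hnb
    obtain ⟨j, hj⟩ | hB := fgap_cover lam (beta lam i - s)
    · -- cell (i,j) has hook s
      have hjlt : j < lam.parts i := by
        by_contra hc
        have h2 : ¬ (i < lam.conjParts j) := fun h => hc ((lt_conj_iff lam i j).mp h)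
        have h3 := conj_le_ell lam j
        have hβ : beta lam i = lam.parts i + (ell lam - 1 - i) := rfl
        have hf : fgap lam j = j + (ell lam - lam.conjParts j) := rfl
        omega
      obtain ⟨he, hlt⟩ := hook_eq_beta_sub lam i j hjlt hi
      have : lam.hook i j = s := by omega
      exact hcore i j hjlt (this ▸ dvd_refl s)
    · exact hnb hB
  · intro H i j hcell hdvd
    have hi : i < ell lam := by
      have h0 : (0:ℕ) < lam.parts i := lt_of_le_of_lt (Nat.zero_le j) hcell
      exact (lt_conj_iff lam i 0).mpr h0
    obtain ⟨he, hlt⟩ := hook_eq_beta_sub lam i j hcell hi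
    obtain ⟨k, hk⟩ := hdvd
    have hkpos : 0 < k := by
      rcases Nat.eq_zero_or_pos k with h | h
      · subst h; simp at hk; omega
      · exact h
    have key : ∀ k, ∀ i, i < ell lam → beta lam i = fgap lam j + s * (k + 1) → False := by
      intro k
      induction k with
      | zero =>
        intro i hi hb
        have h1 : s ≤ beta lam i := by omega
        obtain ⟨r, hr, hβr⟩ := H i hi h1
        have : beta lam r = fgap lam j := by omega
        exact fgap_not_inB lam j ⟨r, hr, this⟩
      | succ m ih =>
        intro i hi hb
        have h1 : s ≤ beta lam i := by nlinarith
        obtain ⟨r, hr, hβr⟩ := H i hi h1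
        apply ih r hr
        have : beta lam i - s = fgap lam j + s * (m + 1) := by
          have : s * (m + 1 + 1) = s * (m+1) + s := by ring
          omega
        omega
    apply key (k - 1) i hi
    have : s * (k - 1 + 1) = s * k := by
      congr 1
      omega
    omega

end Abacus

end SCAux
namespace SCAux

noncomputable def ev (lam : IntPartition) (i : ℕ) : ℕ := lam.parts i - i - 1

section SelfConj

variable (lam : IntPartition)

lemma parts_pos_of_lt_durfee (i : ℕ) (hi : i < lam.durfee) : i < lam.parts i :=
  (lt_durfee_iff lam i).mp hi

lemma durfee_le_head : lam.durfee ≤ lam.parts 0 := by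
  by_contra h
  push_neg at h
  have h2 := (lt_durfee_iff lam (lam.parts 0)).mp h
  have h3 := lam.antitone 0 (lam.parts 0) (Nat.zero_le _)
  omega

lemma parts_tail_le (i : ℕ) (hi : lam.durfee ≤ i) : lam.parts i ≤ lam.durfee := by
  have h1 : ¬ (lam.durfee < lam.parts lam.durfee) := fun h => by
    have := (lt_durfee_iff lam lam.durfee).mpr h
    omega
  have h2 := lam.antitone lam.durfee i hi
  omega

variable (hsc : lam.IsSelfConjugate)
include hsc

lemma ell_eq : ell lam = lam.parts 0 := hsc 0

lemma beta_head (i : ℕ) (hi : i < lam.durfee) :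
    beta lam i = lam.parts 0 + ev lam i := by
  have h1 := ell_eq lam hsc
  have h2 := parts_pos_of_lt_durfee lam i hi
  have h3 := lam.antitone 0 i (Nat.zero_le i)
  have h4 := durfee_le_head lam
  unfold beta ev
  omega

lemma beta_tail (i : ℕ) (hd : 0 < lam.durfee) (hi : lam.durfee ≤ i) :
    beta lam i < lam.parts 0 := by
  have h1 := ell_eq lam hsc
  have h2 := parts_tail_le lam i hi
  have h0 := parts_pos_of_lt_durfee lam 0 hd
  by_cases hc : i < ell lam
  · unfold beta
    omega
  · have h3 : lam.parts i = 0 := by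
      by_contra h
      have : i < lam.conjParts 0 := (lt_conj_iff lam i 0).mpr (by omega)
      exact hc this
    unfold beta
    omega

lemma fgap_head (j : ℕ) (hj : j < lam.durfee) :
    fgap lam j = lam.parts 0 - 1 - ev lam j := by
  have h1 := ell_eq lam hsc
  have h2 := parts_pos_of_lt_durfee lam j hj
  have h3 := lam.antitone 0 j (Nat.zero_le j)
  have h4 := hsc j
  unfold fgap ev
  omega

lemma fgap_tail (j : ℕ) (hj : lam.durfee ≤ j) : lam.parts 0 ≤ fgap lam j := by
  have h1 := ell_eq lam hsc
  have h2 := parts_tail_le lam j hj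
  have h4 := hsc j
  have h3 := lam.antitone 0 j (Nat.zero_le j)
  unfold fgap
  omega

lemma inB_small (x : ℕ) (hd : 0 < lam.durfee) (hx : x < lam.parts 0) :
    InB lam x ↔ ¬ ∃ j, j < lam.durfee ∧ ev lam j = lam.parts 0 - 1 - x := by
  constructor
  · rintro hB ⟨j, hj, hev⟩
    have h1 := fgap_head lam hsc j hj
    have h2 := parts_pos_of_lt_durfee lam j hj
    have h3 := lam.antitone 0 j (Nat.zero_le j)
    have hfx : fgap lam j = x := by
      unfold ev at hev h1
      omega
    exact fgap_not_inB lam j (hfx ▸ hB)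
  · intro hne
    rcases fgap_cover lam x with ⟨j, hj⟩ | hB
    · exfalso
      have hjd : j < lam.durfee := by
        by_contra hc
        have := fgap_tail lam hsc j (by omega)
        omega
      apply hne
      refine ⟨j, hjd, ?_⟩
      have h1 := fgap_head lam hsc j hjd
      have h2 := parts_pos_of_lt_durfee lam j hjd
      have h3 := lam.antitone 0 j (Nat.zero_le j)
      unfold ev at *
      omega
    · exact hB

lemma inB_large (x : ℕ) (hd : 0 < lam.durfee) (hx : lam.parts 0 ≤ x) :
    InB lam x ↔ ∃ i, i < lam.durfee ∧ ev lam i = x - lam.parts 0 := by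
  constructor
  · rintro ⟨i, hi, hβ⟩
    have hid : i < lam.durfee := by
      by_contra hc
      have := beta_tail lam hsc i hd (by omega)
      omega
    refine ⟨i, hid, ?_⟩
    have h1 := beta_head lam hsc i hid
    omega
  · rintro ⟨i, hi, hev⟩
    have h1 := beta_head lam hsc i hi
    have h2 := durfee_le_head lam
    have h3 := ell_eq lam hsc
    exact ⟨i, by omega, by omega⟩

lemma hook_diag (i : ℕ) (hi : i < lam.durfee) : lam.hook i i = 2 * ev lam i + 1 := by
  have h1 := hsc i
  have h2 := parts_pos_of_lt_durfee lam i hi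
  unfold IntPartition.hook ev
  omega

end SelfConj

section Forward

variable (lam : IntPartition) (hsc : lam.IsSelfConjugate)
variable (hstrict : ∀ i j, i < j → j < lam.durfee → lam.parts j < lam.parts i)
include hsc hstrict

lemma parts_chain : ∀ k i, i + k < lam.durfee → lam.parts (i + k) + k ≤ lam.parts i := by
  intro k
  induction k with
  | zero => intro i _; simpa using Nat.le_refl (lam.parts i)
  | succ m ih =>
    intro i hi
    have h1 := ih (i + 1) (by omega)
    have h2 := hstrict i (i + 1) (by omega) (by omega)
    have h3 : i + (m + 1) = (i + 1) + m := by omega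
    rw [h3]
    omega

lemma ev_le_head (j : ℕ) (hj : j < lam.durfee) : ev lam j ≤ ev lam 0 := by
  have h1 : lam.parts (0 + j) + j ≤ lam.parts 0 := parts_chain lam hsc hstrict j 0 (by omega)
  have h2 := parts_pos_of_lt_durfee lam j hj
  unfold ev
  simp only [Nat.zero_add] at h1
  omega

lemma ev_gap (i j : ℕ) (hij : i < j) (hj : j < lam.durfee) :
    ev lam j + 2 ≤ ev lam i := by
  have h1 : lam.parts (i + (j - i)) + (j - i) ≤ lam.parts i :=
    parts_chain lam hsc hstrict (j - i) i (by omega)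
  have h2 : i + (j - i) = j := by omega
  rw [h2] at h1
  have h3 := parts_pos_of_lt_durfee lam j hj
  unfold ev
  omega

lemma forward_bounds (t : ℕ) (ht : 6 ≤ t) (hct : lam.IsCore t) (hct1 : lam.IsCore (t + 1))
    (hd : 0 < lam.durfee) :
    (∀ i, i < lam.durfee → ev lam i < t) ∧
      (∀ i j, i < lam.durfee → j < lam.durfee →
        ev lam i + ev lam j + 1 ≠ t ∧ ev lam i + ev lam j ≠ t) := by
  set n := lam.parts 0 with hn
  have hell := ell_eq lam hsc
  have hdn := durfee_le_head lam
  have hCt := (core_char lam t (by omega)).mp hct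
  have hCt1 := (core_char lam (t + 1) (by omega)).mp hct1
  have hev0 : ev lam 0 = n - 1 := by
    have := parts_pos_of_lt_durfee lam 0 hd
    unfold ev
    omega
  have hnpos : 0 < n := parts_pos_of_lt_durfee lam 0 hd
  -- head bound : n ≤ t
  have hhead : n ≤ t := by
    by_contra hc
    push_neg at hc
    have hβ0 : beta lam 0 = n + (n - 1) := by
      rw [beta_head lam hsc 0 hd, hev0]
    rcases Nat.lt_or_ge n (t + 2) with hcase | hcase
    · -- n = t + 1
      have hn1 : n = t + 1 := by omega
      have h1 := hCt 0 (by omega) (by omega)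
      have h2 := hCt1 0 (by omega) (by omega)
      have h1' : InB lam n := by
        have : beta lam 0 - t = n := by omega
        rwa [this] at h1
      have h2' : InB lam (n - 1) := by
        have : beta lam 0 - (t + 1) = n - 1 := by omega
        rwa [this] at h2
      obtain ⟨i, hi, hevi⟩ := (inB_large lam hsc n hd (le_refl n)).mp h1'
      have h3 := (inB_small lam hsc (n - 1) hd (by omega)).mp h2'
      exact h3 ⟨i, hi, by omega⟩
    · -- n ≥ t + 2
      have h1 := hCt 0 (by omega) (by omega)
      have h2 := hCt1 0 (by omega) (by omega)
      have h1' : InB lam (n + (n - 1 - t)) := by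
        have : beta lam 0 - t = n + (n - 1 - t) := by omega
        rwa [this] at h1
      have h2' : InB lam (n + (n - 2 - t)) := by
        have : beta lam 0 - (t + 1) = n + (n - 2 - t) := by omega
        rwa [this] at h2
      obtain ⟨i, hi, hevi⟩ := (inB_large lam hsc _ hd (by omega)).mp h1'
      obtain ⟨j, hj, hevj⟩ := (inB_large lam hsc _ hd (by omega)).mp h2'
      have hevi' : ev lam i = n - 1 - t := by omega
      have hevj' : ev lam j = n - 2 - t := by omega
      have hij : i ≠ j := by
        intro h
        rw [h] at hevi'
        omega
      rcases Nat.lt_or_ge i j with h | h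
      · have := ev_gap lam hsc hstrict i j h hj
        omega
      · have := ev_gap lam hsc hstrict j i (by omega) hi
        omega
  constructor
  · intro i hi
    have h1 := ev_le_head lam hsc hstrict i hi
    have h2 : ev lam 0 = n - 1 := hev0
    -- need ev i < t : ev i ≤ n - 1 ≤ t - 1
    omega
  · intro i j hi hj
    have hevin : ev lam i ≤ n - 1 := by
      have := ev_le_head lam hsc hstrict i hi
      omega
    have hevjn : ev lam j ≤ n - 1 := by
      have := ev_le_head lam hsc hstrict j hj
      omega
    constructor
    · intro hsum
      -- ev i + ev j = t - 1 ; use C_t at i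
      have hβ : beta lam i = n + ev lam i := beta_head lam hsc i hi
      have h1 := hCt i (by omega) (by omega)
      have hx : beta lam i - t = n + ev lam i - t := by omega
      rw [hx] at h1
      have hxn : n + ev lam i - t < n := by omega
      have h2 := (inB_small lam hsc _ hd hxn).mp h1
      apply h2
      exact ⟨j, hj, by omega⟩
    · intro hsum
      have hβ : beta lam i = n + ev lam i := beta_head lam hsc i hi
      have h1 := hCt1 i (by omega) (by omega)
      have hx : beta lam i - (t + 1) = n + ev lam i - (t + 1) := by omega
      rw [hx] at h1
      have hxn : n + ev lam i - (t + 1) < n := by omega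
      have h2 := (inB_small lam hsc _ hd hxn).mp h1
      apply h2
      exact ⟨j, hj, by omega⟩

end Forward

end SCAux
namespace SCAux

section SizeFormula

variable (lam : IntPartition) (hsc : lam.IsSelfConjugate)
include hsc

lemma conj_eq_filter_card (i : ℕ) (hi : lam.durfee ≤ i) :
    lam.parts i = ((Finset.range lam.durfee).filter (fun r => i < lam.parts r)).card := by
  classical
  have h4 := hsc i
  rw [← h4]
  unfold IntPartition.conjParts
  have hset : {r : ℕ | i < lam.parts r}
      = ↑((Finset.range lam.durfee).filter (fun r => i < lam.parts r)) := by
    ext r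
    simp only [Set.mem_setOf_eq, Finset.coe_filter, Finset.mem_range, Set.mem_setOf_eq]
    constructor
    · intro h
      refine ⟨?_, h⟩
      by_contra hc
      have := parts_tail_le lam r (by omega)
      have h5 := lam.antitone lam.durfee r (by omega)
      omega
    · tauto
  rw [hset, Nat.card_coe_set_eq, Set.ncard_coe_finset]

lemma parts_ge_durfee (r : ℕ) (hr : r < lam.durfee) : lam.durfee ≤ lam.parts r := by
  have h2 : lam.durfee - 1 < lam.parts (lam.durfee - 1) :=
    parts_pos_of_lt_durfee lam (lam.durfee - 1) (by omega)
  have h3 := lam.antitone r (lam.durfee - 1) (by omega)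
  omega

lemma size_eq : lam.size = ∑ r ∈ Finset.range lam.durfee, (2 * ev lam r + 1) := by
  classical
  obtain ⟨N, hN⟩ := lam.finite
  set d := lam.durfee with hd
  have hdhead : d ≤ lam.parts 0 := durfee_le_head lam
  set M := N + lam.parts 0 + d with hM
  have hsize : lam.size = ∑ i ∈ Finset.range M, lam.parts i := by
    unfold IntPartition.size
    apply finsum_eq_sum_of_support_subset
    intro i hi
    simp only [Function.mem_support] at hi
    simp only [Finset.coe_range, Set.mem_Iio]
    by_contra hc
    exact hi (hN i (by omega))
  have hsplit : ∑ i ∈ Finset.range M, lam.parts i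
      = (∑ i ∈ Finset.range d, lam.parts i) + ∑ i ∈ Finset.Ico d M, lam.parts i := by
    simp only [Finset.range_eq_Ico]
    exact (Finset.sum_Ico_consecutive _ (Nat.zero_le d) (show d ≤ M by omega)).symm
  have htail : ∑ i ∈ Finset.Ico d M, lam.parts i
      = ∑ r ∈ Finset.range d, (lam.parts r - d) := by
    have h1 : ∀ i ∈ Finset.Ico d M, lam.parts i
        = ∑ r ∈ Finset.range d, (if i < lam.parts r then 1 else 0) := by
      intro i hi
      simp only [Finset.mem_Ico] at hi
      rw [conj_eq_filter_card lam hsc i hi.1, Finset.card_filter]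
    rw [Finset.sum_congr rfl h1, Finset.sum_comm]
    apply Finset.sum_congr rfl
    intro r hr
    simp only [Finset.mem_range] at hr
    have hrd : d ≤ lam.parts r := parts_ge_durfee lam hsc r hr
    have hrM : lam.parts r ≤ M := by
      have := lam.antitone 0 r (Nat.zero_le r)
      omega
    have h2 : ∑ i ∈ Finset.Ico d M, (if i < lam.parts r then 1 else 0)
        = ((Finset.Ico d M).filter (fun i => i < lam.parts r)).card := by
      rw [Finset.card_filter]
    rw [h2]
    have h3 : (Finset.Ico d M).filter (fun i => i < lam.parts r)
        = Finset.Ico d (lam.parts r) := by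
      ext i
      simp only [Finset.mem_filter, Finset.mem_Ico]
      omega
    rw [h3, Nat.card_Ico]
  have hgauss : ∑ r ∈ Finset.range d, (2 * r + 1) = d * d := by
    have h4 := Finset.sum_range_id_mul_two d
    have h5 : ∑ r ∈ Finset.range d, (2 * r + 1)
        = (∑ r ∈ Finset.range d, r) * 2 + d := by
      rw [Finset.sum_add_distrib, Finset.sum_const, Finset.card_range, smul_eq_mul, mul_one,
        Finset.sum_mul]
      congr 1
      apply Finset.sum_congr rfl
      intro x _
      ring
    rcases Nat.eq_zero_or_pos d with h | h
    · simp [h]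
    · rw [h5, h4]
      cases d with
      | zero => simp
      | succ m => simp only [Nat.add_sub_cancel]; ring
  have hA : (∑ r ∈ Finset.range d, lam.parts r) + (∑ r ∈ Finset.range d, (lam.parts r - d))
      + d * d = ∑ r ∈ Finset.range d, 2 * lam.parts r := by
    have h6 : ∑ r ∈ Finset.range d, (lam.parts r - d) + ∑ r ∈ Finset.range d, d
        = ∑ r ∈ Finset.range d, lam.parts r := by
      rw [← Finset.sum_add_distrib]
      apply Finset.sum_congr rfl
      intro r hr
      simp only [Finset.mem_range] at hr
      have := parts_ge_durfee lam hsc r hr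
      omega
    have h7 : ∑ r ∈ Finset.range d, d = d * d := by
      rw [Finset.sum_const, Finset.card_range, smul_eq_mul]
    have h8 : ∑ r ∈ Finset.range d, 2 * lam.parts r
        = ∑ r ∈ Finset.range d, lam.parts r + ∑ r ∈ Finset.range d, lam.parts r := by
      rw [← Finset.sum_add_distrib]
      apply Finset.sum_congr rfl
      intro r _
      ring
    omega
  have hB : (∑ r ∈ Finset.range d, (2 * ev lam r + 1)) + d * d
      = ∑ r ∈ Finset.range d, 2 * lam.parts r := by
    have h9 : (∑ r ∈ Finset.range d, (2 * ev lam r + 1)) + (∑ r ∈ Finset.range d, (2 * r + 1))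
        = ∑ r ∈ Finset.range d, 2 * lam.parts r := by
      rw [← Finset.sum_add_distrib]
      apply Finset.sum_congr rfl
      intro r hr
      simp only [Finset.mem_range] at hr
      have := parts_pos_of_lt_durfee lam r hr
      unfold ev
      omega
    omega
  rw [hsize, hsplit, htail]
  omega

end SizeFormula

end SCAux
namespace SCAux

section Build

variable (q : ℕ → ℕ) (d : ℕ)

noncomputable def bparts (i : ℕ) : ℕ :=
  if i < d then q i + i + 1 else ((Finset.range d).filter (fun r => i < q r + r + 1)).card

variable (hq : ∀ i j, i < j → j < d → q j + 2 ≤ q i)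

lemma qchain (hq : ∀ i j, i < j → j < d → q j + 2 ≤ q i) :
    ∀ k i, i + k < d → q (i + k) + 2 * k ≤ q i := by
  intro k
  induction k with
  | zero => intro i _; simpa using Nat.le_refl (q i)
  | succ m ih =>
    intro i hi
    have h1 := ih (i + 1) (by omega)
    have h2 := hq i (i + 1) (by omega) (by omega)
    have h3 : i + (m + 1) = (i + 1) + m := by omega
    rw [h3]
    omega

lemma aval_mono (hq : ∀ i j, i < j → j < d → q j + 2 ≤ q i) (i j : ℕ) (hij : i ≤ j)
    (hj : j < d) : q j + j + 1 ≤ q i + i + 1 := by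
  rcases Nat.eq_or_lt_of_le hij with h | h
  · subst h; omega
  · have h1 := qchain q d hq (j - i) i (by omega)
    have h2 : i + (j - i) = j := by omega
    rw [h2] at h1
    omega

lemma aval_strict (hq : ∀ i j, i < j → j < d → q j + 2 ≤ q i) (i j : ℕ) (hij : i < j)
    (hj : j < d) : q j + j + 1 + 1 ≤ q i + i + 1 := by
  have h1 := qchain q d hq (j - i) i (by omega)
  have h2 : i + (j - i) = j := by omega
  rw [h2] at h1
  omega

lemma aval_ge_d (hq : ∀ i j, i < j → j < d → q j + 2 ≤ q i) (r : ℕ) (hr : r < d) :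
    d ≤ q r + r + 1 := by
  have h1 := aval_mono q d hq r (d - 1) (by omega) (by omega)
  omega

lemma count_iff (hq : ∀ i j, i < j → j < d → q j + 2 ≤ q i) (i j : ℕ) (hj : j < d) :
    (j < ((Finset.range d).filter (fun r => i < q r + r + 1)).card) ↔ i < q j + j + 1 := by
  classical
  constructor
  · intro h
    by_contra hc
    push_neg at hc
    have hsub : (Finset.range d).filter (fun r => i < q r + r + 1) ⊆ Finset.range j := by
      intro r hr
      simp only [Finset.mem_filter, Finset.mem_range] at hr ⊢
      by_contra hrj
      push_neg at hrj
      have := aval_mono q d hq j r hrj hr.1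
      omega
    have := Finset.card_le_card hsub
    rw [Finset.card_range] at this
    omega
  · intro h
    have hsub : Finset.range (j + 1) ⊆ (Finset.range d).filter (fun r => i < q r + r + 1) := by
      intro r hr
      simp only [Finset.mem_range] at hr
      simp only [Finset.mem_filter, Finset.mem_range]
      have := aval_mono q d hq r j (by omega) hj
      exact ⟨by omega, by omega⟩
    have := Finset.card_le_card hsub
    rw [Finset.card_range] at this
    omega

lemma bcard_le (i : ℕ) : ((Finset.range d).filter (fun r => i < q r + r + 1)).card ≤ d := by
  classical
  calc ((Finset.range d).filter (fun r => i < q r + r + 1)).card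
      ≤ (Finset.range d).card := Finset.card_filter_le _ _
    _ = d := Finset.card_range d

noncomputable def build (hq : ∀ i j, i < j → j < d → q j + 2 ≤ q i) : IntPartition where
  parts := bparts q d
  antitone := by
    classical
    intro i j hij
    unfold bparts
    by_cases hjd : j < d
    · rw [if_pos hjd, if_pos (by omega)]
      exact aval_mono q d hq i j hij hjd
    · rw [if_neg hjd]
      by_cases hid : i < d
      · rw [if_pos hid]
        have h1 := bcard_le q d j
        have h2 := aval_ge_d q d hq i hid
        omega
      · rw [if_neg hid]
        apply Finset.card_le_card
        intro r hr
        simp only [Finset.mem_filter, Finset.mem_range] at hr ⊢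
        exact ⟨hr.1, by omega⟩
  finite := by
    classical
    refine ⟨q 0 + d + 1, fun i hi => ?_⟩
    unfold bparts
    rw [if_neg (by omega)]
    rw [Finset.card_eq_zero, Finset.filter_eq_empty_iff]
    intro r hr
    simp only [Finset.mem_range] at hr
    have hq0 : q r ≤ q 0 := by
      rcases Nat.eq_zero_or_pos r with h | h
      · subst h; omega
      · have := hq 0 r h hr
        omega
    omega

lemma build_parts_lt (i : ℕ) (hi : i < d) : (build q d hq).parts i = q i + i + 1 := by
  show bparts q d i = _
  unfold bparts
  rw [if_pos hi]

lemma build_parts_ge (i : ℕ) (hi : d ≤ i) :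
    (build q d hq).parts i = ((Finset.range d).filter (fun r => i < q r + r + 1)).card := by
  show bparts q d i = _
  unfold bparts
  rw [if_neg (by omega)]

lemma build_selfconj : (build q d hq).IsSelfConjugate := by
  classical
  intro j
  unfold IntPartition.conjParts
  by_cases hjd : j < d
  · have hset : {i : ℕ | j < (build q d hq).parts i} = Set.Iio (q j + j + 1) := by
      ext i
      simp only [Set.mem_setOf_eq, Set.mem_Iio]
      by_cases hid : i < d
      · rw [build_parts_lt q d hq i hid]
        have h1 := aval_ge_d q d hq i hid
        have h2 := aval_ge_d q d hq j hjd
        constructor <;> intro <;> omega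
      · push_neg at hid
        rw [build_parts_ge q d hq i hid]
        exact count_iff q d hq i j hjd
    rw [hset, build_parts_lt q d hq j hjd]
    rw [← Finset.coe_Iio, Nat.card_coe_set_eq, Set.ncard_coe_finset, Nat.card_Iio]
  · push_neg at hjd
    have hset : {i : ℕ | j < (build q d hq).parts i}
        = ↑((Finset.range d).filter (fun r => j < q r + r + 1)) := by
      ext i
      simp only [Set.mem_setOf_eq, Finset.coe_filter, Finset.mem_range, Set.mem_setOf_eq]
      by_cases hid : i < d
      · rw [build_parts_lt q d hq i hid]
        tauto
      · push_neg at hid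
        rw [build_parts_ge q d hq i hid]
        have h1 := bcard_le q d i
        constructor
        · intro h; omega
        · rintro ⟨h2, _⟩; omega
    rw [hset, Nat.card_coe_set_eq, Set.ncard_coe_finset]
    rw [build_parts_ge q d hq j hjd]

lemma build_durfee : (build q d hq).durfee = d := by
  have h1 : ∀ i, i < (build q d hq).durfee ↔ i < (build q d hq).parts i :=
    fun i => lt_durfee_iff (build q d hq) i
  by_contra hne
  rcases Nat.lt_or_ge (build q d hq).durfee d with h | h
  · have h2 := (h1 (build q d hq).durfee).mpr
      (by rw [build_parts_lt q d hq _ h]; omega)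
    omega
  · have hd : d < (build q d hq).durfee := by omega
    have h2 := (h1 d).mp hd
    rw [build_parts_ge q d hq d (le_refl d)] at h2
    have := bcard_le q d d
    omega

lemma build_ev (i : ℕ) (hi : i < d) : ev (build q d hq) i = q i := by
  unfold ev
  rw [build_parts_lt q d hq i hi]
  omega

lemma build_core (t s : ℕ) (hts : t ≤ s) (hst : 0 < t) (hd : 0 < d)
    (hlt : ∀ i, i < d → q i < t)
    (hsum : ∀ i j, i < d → j < d → q i + q j + 1 ≠ s) :
    (build q d hq).IsCore s := by
  have hsc := build_selfconj q d hq
  have hdur : (build q d hq).durfee = d := build_durfee q d hq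
  apply (core_char (build q d hq) s (by omega)).mpr
  intro i hiℓ hsβ
  have hd' : 0 < (build q d hq).durfee := by omega
  by_cases hid : i < d
  · have hβ : beta (build q d hq) i = (build q d hq).parts 0 + ev (build q d hq) i :=
      beta_head (build q d hq) hsc i (by omega)
    have hevi : ev (build q d hq) i = q i := build_ev q d hq i hid
    have hqi := hlt i hid
    have hx : beta (build q d hq) i - s < (build q d hq).parts 0 := by omega
    rw [inB_small (build q d hq) hsc _ hd' hx]
    rintro ⟨j, hjd, hevj⟩
    have hevj' : ev (build q d hq) j = q j := build_ev q d hq j (by omega)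
    have hqj := hlt j (by omega)
    apply hsum j i (by omega) hid
    omega
  · have hβ : beta (build q d hq) i < (build q d hq).parts 0 :=
      beta_tail (build q d hq) hsc i hd' (by omega)
    have hx : beta (build q d hq) i - s < (build q d hq).parts 0 := by omega
    rw [inB_small (build q d hq) hsc _ hd' hx]
    rintro ⟨j, hjd, hevj⟩
    have hevj' : ev (build q d hq) j = q j := build_ev q d hq j (by omega)
    have hqj := hlt j (by omega)
    omega

lemma build_size : (build q d hq).size = ∑ r ∈ Finset.range d, (2 * q r + 1) := by
  rw [size_eq _ (build_selfconj q d hq), build_durfee q d hq]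
  apply Finset.sum_congr rfl
  intro r hr
  simp only [Finset.mem_range] at hr
  rw [build_ev q d hq r hr]

lemma build_inDS (t : ℕ) (ht : 6 ≤ t) (hd : 0 < d)
    (hlt : ∀ i, i < d → q i < t)
    (hsum : ∀ i j, i < d → j < d → q i + q j + 1 ≠ t ∧ q i + q j ≠ t) :
    (build q d hq).InDS t := by
  refine ⟨build_selfconj q d hq, ?_, ?_, ?_⟩
  · exact build_core q d hq t t (le_refl t) (by omega) hd hlt
      (fun i j hi hj => (hsum i j hi hj).1)
  · exact build_core q d hq t (t + 1) (by omega) (by omega) hd hlt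
      (fun i j hi hj => by have := (hsum i j hi hj).2; omega)
  · intro i j hi hj hne
    rw [build_durfee q d hq] at hi hj
    rw [build_parts_lt q d hq i hi, build_parts_lt q d hq j hj]
    rcases Nat.lt_or_ge i j with h | h
    · have := aval_strict q d hq i j h hj
      omega
    · have := aval_strict q d hq j i (by omega) hi
      omega

end Build

end SCAux
namespace SCAux

section Comb

variable (t d : ℕ) (q : ℕ → ℕ) (i₀ : ℕ)

/-- Single-element bump helper. -/
lemma single_update
    (hi₀ : i₀ + 1 < d)
    (hdec : ∀ i j, i < j → j < d → q j + 2 ≤ q i)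
    (hlt : ∀ i, i < d → q i < t)
    (hsum : ∀ i j, i < d → j < d → q i + q j + 1 ≠ t ∧ q i + q j ≠ t)
    (v : ℕ) (hv1 : q (i₀ + 1) < v) (hv2 : v + 2 ≤ q i₀) (hvt : v < t)
    (hvsum : ∀ j, j < d → j ≠ i₀ + 1 → q j + v + 1 ≠ t ∧ q j + v ≠ t)
    (hvself : 2 * v + 1 ≠ t ∧ 2 * v ≠ t) :
    ∃ q' : ℕ → ℕ,
      (∀ i j, i < j → j < d → q' j + 2 ≤ q' i) ∧ (∀ i, i < d → q' i < t) ∧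
      (∀ i j, i < d → j < d → q' i + q' j + 1 ≠ t ∧ q' i + q' j ≠ t) ∧
      (∀ i, q i ≤ q' i) ∧ q (i₀ + 1) < q' (i₀ + 1) := by
  classical
  have qmono : ∀ i j, i ≤ j → j < d → q j ≤ q i := by
    intro i j hij hj
    rcases Nat.eq_or_lt_of_le hij with h | h
    · subst h; exact le_refl _
    · have := hdec i j h hj; omega
  set q' : ℕ → ℕ := fun i => if i = i₀ + 1 then v else q i with hq'def
  have hv : ∀ i, q' i = if i = i₀ + 1 then v else q i := fun _ => rfl
  have hval1 : q' (i₀ + 1) = v := by rw [hv, if_pos rfl]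
  have hval2 : ∀ i, i ≠ i₀ + 1 → q' i = q i := by
    intro i h
    rw [hv, if_neg h]
  refine ⟨q', ?_, ?_, ?_, ?_, ?_⟩
  · intro i j hij hj
    rcases eq_or_ne i (i₀ + 1) with hi1 | hi1
    · subst hi1
      rw [hval1, hval2 j (by omega)]
      have := hdec (i₀ + 1) j hij hj
      omega
    · rcases eq_or_ne j (i₀ + 1) with hj1 | hj1
      · subst hj1
        rw [hval1, hval2 i hi1]
        have h1 : q i₀ ≤ q i := qmono i i₀ (by omega) (by omega)
        omega
      · rw [hval2 i hi1, hval2 j hj1]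
        exact hdec i j hij hj
  · intro i hi
    rcases eq_or_ne i (i₀ + 1) with hi1 | hi1
    · subst hi1; rw [hval1]; exact hvt
    · rw [hval2 i hi1]; exact hlt i hi
  · intro i j hi hj
    rcases eq_or_ne i (i₀ + 1) with hi1 | hi1 <;> rcases eq_or_ne j (i₀ + 1) with hj1 | hj1
    · subst hi1; subst hj1
      rw [hval1]
      omega
    · subst hi1
      rw [hval1, hval2 j hj1]
      have := hvsum j hj hj1
      omega
    · subst hj1
      rw [hval1, hval2 i hi1]
      have := hvsum i hi hi1
      omega
    · rw [hval2 i hi1, hval2 j hj1]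
      exact hsum i j hi hj
  · intro i
    rcases eq_or_ne i (i₀ + 1) with hi1 | hi1
    · subst hi1; rw [hval1]; omega
    · rw [hval2 i hi1]
  · rw [hval1]
    exact hv1

lemma comb
    (ht : 6 ≤ t) (hi₀ : i₀ + 1 < d)
    (hdec : ∀ i j, i < j → j < d → q j + 2 ≤ q i)
    (hlt : ∀ i, i < d → q i < t)
    (hsum : ∀ i j, i < d → j < d → q i + q j + 1 ≠ t ∧ q i + q j ≠ t)
    (hgap : q (i₀ + 1) + 4 ≤ q i₀) :
    ∃ q' : ℕ → ℕ,
      (∀ i j, i < j → j < d → q' j + 2 ≤ q' i) ∧ (∀ i, i < d → q' i < t) ∧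
      (∀ i j, i < d → j < d → q' i + q' j + 1 ≠ t ∧ q' i + q' j ≠ t) ∧
      (∀ i, q i ≤ q' i) ∧ q (i₀ + 1) < q' (i₀ + 1) := by
  classical
  set b := q (i₀ + 1) with hb
  have qmono : ∀ i j, i ≤ j → j < d → q j ≤ q i := by
    intro i j hij hj
    rcases Nat.eq_or_lt_of_le hij with h | h
    · subst h; exact le_refl _
    · have := hdec i j h hj; omega
  have hj4 : ∀ j, j < d → j ≠ i₀ + 1 → q j + 2 ≤ b ∨ b + 4 ≤ q j := by
    intro j hj hj1
    rcases Nat.lt_or_ge j (i₀ + 1) with h | h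
    · right
      have h1 : q i₀ ≤ q j := qmono j i₀ (by omega) (by omega)
      omega
    · left
      have h1 : q j + 2 ≤ q (i₀ + 1) := hdec (i₀ + 1) j (by omega) hj
      omega
  have hself := hsum (i₀ + 1) (i₀ + 1) hi₀ hi₀
  have hbt : b < t := hlt (i₀ + 1) hi₀
  have hat : q i₀ < t := hlt i₀ (by omega)
  have hb5 : b + 5 ≤ t := by omega
  rcases (by omega : 2 * b + 2 = t ∨ 2 * b + 3 = t ∨ 2 * b + 4 = t ∨ 2 * b + 5 = t ∨
      (2 * b + 6 ≤ t ∨ t + 1 ≤ 2 * b)) with hc | hc | hc | hc | hc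
  · exact single_update t d q i₀ hi₀ hdec hlt hsum (b + 2) (by omega) (by omega) (by omega)
      (fun j hj hj1 => by have := hj4 j hj hj1; omega) (by omega)
  · exact single_update t d q i₀ hi₀ hdec hlt hsum (b + 2) (by omega) (by omega) (by omega)
      (fun j hj hj1 => by have := hj4 j hj hj1; omega) (by omega)
  · exact single_update t d q i₀ hi₀ hdec hlt hsum (b + 1) (by omega) (by omega) (by omega)
      (fun j hj hj1 => by
        have h1 := hj4 j hj hj1
        have h2 := hsum j (i₀ + 1) hj hi₀
        omega) (by omega)
  · exact single_update t d q i₀ hi₀ hdec hlt hsum (b + 1) (by omega) (by omega) (by omega)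
      (fun j hj hj1 => by
        have h1 := hj4 j hj hj1
        have h2 := hsum j (i₀ + 1) hj hi₀
        omega) (by omega)
  · by_cases hW : ∃ j, j < d ∧ q j = t - 2 - b
    · -- double update
      obtain ⟨jw, hjw, hqjw⟩ := hW
      set w := t - 2 - b with hw
      have hw3 : 3 ≤ w := by omega
      have hjwne : jw ≠ i₀ + 1 := by
        intro h
        rw [h] at hqjw
        omega
      have hwfact : ∀ j, j < d → j ≠ i₀ + 1 → j ≠ jw → (q j + 2 ≤ w ∨ w + 3 ≤ q j) := by
        intro j hj hj1 hjw'
        have h1 : q j + 2 ≤ q jw ∨ q jw + 2 ≤ q j := by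
          rcases Nat.lt_or_ge j jw with h | h
          · right; exact hdec j jw h hjw
          · left
            exact hdec jw j (by omega) hj
        have h2 := hsum j (i₀ + 1) hj hi₀
        omega
      have hjworder := hj4 jw hjw hjwne
      set q' : ℕ → ℕ := fun i => if i = i₀ + 1 then b + 2 else if i = jw then w + 1 else q i
        with hq'def
      have hv : ∀ i, q' i = if i = i₀ + 1 then b + 2 else if i = jw then w + 1 else q i :=
        fun _ => rfl
      have hval1 : q' (i₀ + 1) = b + 2 := by rw [hv, if_pos rfl]
      have hval2 : q' jw = w + 1 := by rw [hv, if_neg hjwne, if_pos rfl]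
      have hval3 : ∀ i, i ≠ i₀ + 1 → i ≠ jw → q' i = q i := by
        intro i h1 h2
        rw [hv, if_neg h1, if_neg h2]
      refine ⟨q', ?_, ?_, ?_, ?_, ?_⟩
      · intro i j hij hj
        rcases eq_or_ne i (i₀ + 1) with hi1 | hi1
        · subst hi1
          rcases eq_or_ne j jw with hj2 | hj2
          · subst hj2
            rw [hval1, hval2]
            have h1 := hdec (i₀ + 1) j hij hj
            omega
          · rw [hval1, hval3 j (by omega) hj2]
            have h1 := hdec (i₀ + 1) j hij hj
            omega
        · rcases eq_or_ne i jw with hi2 | hi2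
          · subst hi2
            rcases eq_or_ne j (i₀ + 1) with hj1 | hj1
            · subst hj1
              rw [hval1, hval2]
              have h1 : q i₀ ≤ q i := qmono i i₀ (by omega) (by omega)
              omega
            · rw [hval2, hval3 j hj1 (by omega)]
              have h1 := hdec i j hij hj
              omega
          · rcases eq_or_ne j (i₀ + 1) with hj1 | hj1
            · subst hj1
              rw [hval1, hval3 i hi1 hi2]
              have h1 : q i₀ ≤ q i := qmono i i₀ (by omega) (by omega)
              omega
            · rcases eq_or_ne j jw with hj2 | hj2
              · subst hj2
                rw [hval2, hval3 i hi1 hi2]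
                have h1 := hwfact i (by omega) hi1 hi2
                have h2 := hdec i j hij hj
                omega
              · rw [hval3 i hi1 hi2, hval3 j hj1 hj2]
                exact hdec i j hij hj
      · intro i hi
        rcases eq_or_ne i (i₀ + 1) with hi1 | hi1
        · subst hi1; rw [hval1]; omega
        · rcases eq_or_ne i jw with hi2 | hi2
          · subst hi2; rw [hval2]; omega
          · rw [hval3 i hi1 hi2]; exact hlt i hi
      · intro i j hi hj
        rcases eq_or_ne i (i₀ + 1) with hi1 | hi1
        · subst hi1
          rcases eq_or_ne j (i₀ + 1) with hj1 | hj1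
          · subst hj1
            rw [hval1]
            omega
          · rcases eq_or_ne j jw with hj2 | hj2
            · subst hj2
              rw [hval1, hval2]
              omega
            · rw [hval1, hval3 j hj1 hj2]
              have h1 := hwfact j hj hj1 hj2
              have h2 : q j + 2 ≤ q jw ∨ q jw + 2 ≤ q j := by
                rcases Nat.lt_or_ge j jw with h | h
                · right; exact hdec j jw h hjw
                · left; exact hdec jw j (by omega) hj
              omega
        · rcases eq_or_ne i jw with hi2 | hi2
          · subst hi2
            rcases eq_or_ne j (i₀ + 1) with hj1 | hj1
            · subst hj1
              rw [hval1, hval2]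
              omega
            · rcases eq_or_ne j i with hj2 | hj2
              · subst hj2
                rw [hval2]
                omega
              · rw [hval2, hval3 j hj1 hj2]
                have h1 := hj4 j hj hj1
                omega
          · rcases eq_or_ne j (i₀ + 1) with hj1 | hj1
            · subst hj1
              rw [hval1, hval3 i hi1 hi2]
              have h1 := hwfact i hi hi1 hi2
              have h2 : q i + 2 ≤ q jw ∨ q jw + 2 ≤ q i := by
                rcases Nat.lt_or_ge i jw with h | h
                · right; exact hdec i jw h hjw
                · left; exact hdec jw i (by omega) hi
              omega
            · rcases eq_or_ne j jw with hj2 | hj2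
              · subst hj2
                rw [hval2, hval3 i hi1 hi2]
                have h1 := hj4 i hi hi1
                omega
              · rw [hval3 i hi1 hi2, hval3 j hj1 hj2]
                exact hsum i j hi hj
      · intro i
        rcases eq_or_ne i (i₀ + 1) with hi1 | hi1
        · subst hi1; rw [hval1]; omega
        · rcases eq_or_ne i jw with hi2 | hi2
          · subst hi2; rw [hval2]; omega
          · rw [hval3 i hi1 hi2]
      · rw [hval1]
        omega
    · push_neg at hW
      exact single_update t d q i₀ hi₀ hdec hlt hsum (b + 1) (by omega) (by omega) (by omega)
        (fun j hj hj1 => by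
          have h1 := hsum j (i₀ + 1) hj hi₀
          have h2 := hW j hj
          omega) (by omega)

end Comb

end SCAux

open SCAux in
/-- For `t ≥ 6`, in a partition of largest size in `DS(t)` the difference of
consecutive main diagonal hook lengths is `4` or `6`. -/
theorem diag_hook_gaps_of_largest_inDS (t : ℕ) (ht : 6 ≤ t) (lam : IntPartition)
    (hlam : lam.InDS t)
    (hmax : ∀ mu : IntPartition, mu.InDS t → mu.size ≤ lam.size) :
    ∀ i : ℕ, i + 1 < lam.durfee →
      lam.hook i i - lam.hook (i + 1) (i + 1) = 4 ∨
        lam.hook i i - lam.hook (i + 1) (i + 1) = 6 := by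
  intro i₀ hi₀
  obtain ⟨hsc, hct, hct1, hdist⟩ := hlam
  have hstrict : ∀ i j, i < j → j < lam.durfee → lam.parts j < lam.parts i := by
    intro i j hij hj
    have h1 := lam.antitone i j (by omega)
    have h2 := hdist i j (by omega) hj (by omega)
    omega
  have hd0 : 0 < lam.durfee := by omega
  obtain ⟨hlt, hsum⟩ := forward_bounds lam hsc hstrict t ht hct hct1 hd0
  have h1 : lam.hook i₀ i₀ = 2 * ev lam i₀ + 1 := hook_diag lam hsc i₀ (by omega)
  have h2 : lam.hook (i₀ + 1) (i₀ + 1) = 2 * ev lam (i₀ + 1) + 1 :=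
    hook_diag lam hsc (i₀ + 1) hi₀
  have hev_gap : ev lam (i₀ + 1) + 2 ≤ ev lam i₀ :=
    ev_gap lam hsc hstrict i₀ (i₀ + 1) (by omega) hi₀
  by_cases hbig : ev lam (i₀ + 1) + 4 ≤ ev lam i₀
  · exfalso
    have hdec : ∀ i j, i < j → j < lam.durfee → ev lam j + 2 ≤ ev lam i :=
      fun i j hij hj => ev_gap lam hsc hstrict i j hij hj
    obtain ⟨q', hdec', hlt', hsum', hle, hstr⟩ :=
      comb t lam.durfee (ev lam) i₀ ht hi₀ hdec hlt hsum hbig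
    have hmu := build_inDS q' lam.durfee hdec' t ht hd0 hlt' hsum'
    have hsz := build_size q' lam.durfee hdec'
    have hszlam : lam.size = ∑ r ∈ Finset.range lam.durfee, (2 * ev lam r + 1) :=
      size_eq lam hsc
    have hlt2 : lam.size < (build q' lam.durfee hdec').size := by
      rw [hsz, hszlam]
      apply Finset.sum_lt_sum
      · intro i _
        have := hle i
        omega
      · refine ⟨i₀ + 1, Finset.mem_range.mpr hi₀, ?_⟩
        omega
    have := hmax _ hmu
    omega
  · omega
end

section
/- Let m(t) be the largest size of a partition in DS(t). Then m(1) = 0, m(2) = 1, and m(t) = 2t − 1 for 3 ≤ t ≤ 5. -/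
namespace IntPartition

/- ### auxiliary lemmas -/

/-- A finite lower set in ℕ consists exactly of the numbers below its cardinality. -/
lemma lower_mem_iff (S : Set ℕ) (hfin : S.Finite) (hlow : ∀ ⦃i j : ℕ⦄, i ≤ j → j ∈ S → i ∈ S) :
    ∀ i, i ∈ S ↔ i < Nat.card S := by
  classical
  have : Fintype S := hfin.fintype
  have hcard : Nat.card S = S.toFinset.card := by
    simp [Nat.card_eq_card_toFinset]
  have hsub : S.toFinset ⊆ Finset.range S.toFinset.card := by
    intro i hi
    rw [Finset.mem_range]
    by_contra h
    push_neg at h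
    have : Finset.range (i+1) ⊆ S.toFinset := by
      intro k hk
      rw [Finset.mem_range] at hk
      rw [Set.mem_toFinset]
      exact hlow (Nat.lt_succ_iff.mp hk) (Set.mem_toFinset.mp hi)
    have := Finset.card_le_card this
    rw [Finset.card_range] at this
    omega
  have heq : S.toFinset = Finset.range S.toFinset.card :=
    Finset.eq_of_subset_of_card_le hsub (by simp)
  intro i
  rw [hcard, ← Finset.mem_range, ← heq, Set.mem_toFinset]

lemma conj_set_finite (lam : IntPartition) (j : ℕ) : {i : ℕ | j < lam.parts i}.Finite := by
  obtain ⟨N, hN⟩ := lam.finite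
  apply Set.Finite.subset (Set.finite_Iio N)
  intro i hi
  simp only [Set.mem_setOf_eq] at hi
  simp only [Set.mem_Iio]
  by_contra h
  push_neg at h
  rw [hN i h] at hi
  omega

/-- Galois connection between a partition and its conjugate. -/
lemma galois (lam : IntPartition) (i j : ℕ) : i < lam.conjParts j ↔ j < lam.parts i := by
  have := lower_mem_iff {i : ℕ | j < lam.parts i} (lam.conj_set_finite j)
    (fun i' i hle hi => lt_of_lt_of_le hi (lam.antitone i' i hle)) i
  simp only [Set.mem_setOf_eq] at this
  rw [conjParts, ← this]

lemma durfee_iff (lam : IntPartition) (i : ℕ) : i < lam.durfee ↔ i < lam.parts i := by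
  have hfin : {i : ℕ | i < lam.parts i}.Finite := by
    obtain ⟨N, hN⟩ := lam.finite
    apply Set.Finite.subset (Set.finite_Iio N)
    intro i hi
    simp only [Set.mem_setOf_eq] at hi
    simp only [Set.mem_Iio]
    by_contra h
    push_neg at h
    rw [hN i h] at hi
    omega
  have := lower_mem_iff {i : ℕ | i < lam.parts i} hfin
    (fun i' i hle hi => lt_of_le_of_lt hle (lt_of_lt_of_le hi (lam.antitone i' i hle))) i
  simp only [Set.mem_setOf_eq] at this
  rw [durfee, ← this]

lemma exists_F (lam : IntPartition) (t : ℕ) (hds : lam.InDS t) (ha : 0 < lam.parts 0) :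
    ∃ F : Finset ℕ, F.card = lam.parts 0 ∧ (2 * lam.parts 0 - 1) ∈ F ∧
      (∀ b ∈ F, 1 ≤ b ∧ b ≤ 2 * lam.parts 0 - 1) ∧
      (∀ b ∈ F, t < b → b - t ∈ F) ∧
      (∀ b ∈ F, t + 1 < b → b - (t + 1) ∈ F) ∧
      (∀ b ∈ F, ¬ t ∣ b ∧ ¬ (t + 1) ∣ b) ∧
      (∀ b ∈ F, ∀ c ∈ F, b + c ≠ 2 * lam.parts 0 - 1) ∧
      (∀ b, lam.parts 0 ≤ b → b ∈ F → b + 1 ∈ F → False) ∧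
      lam.size + (∑ i ∈ Finset.range (lam.parts 0), i) = ∑ b ∈ F, b := by
  classical
  obtain ⟨hsc, hcore1, hcore2, hdist⟩ := hds
  set a := lam.parts 0 with haa
  -- symmetric Galois
  have hgal : ∀ i j : ℕ, i < lam.parts j ↔ j < lam.parts i := by
    intro i j
    rw [← hsc j, lam.galois i j]
  have hle : ∀ i, lam.parts i ≤ a := fun i => lam.antitone 0 i (Nat.zero_le i)
  have hpos : ∀ i, i < a → 0 < lam.parts i := by
    intro i hi
    exact (hgal i 0).mp hi
  have hzero : ∀ i, a ≤ i → lam.parts i = 0 := by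
    intro i hi
    by_contra h
    have : i < a := (hgal i 0).mpr (Nat.pos_of_ne_zero h)
    omega
  -- the key inequality
  have hL7 : ∀ k j : ℕ, lam.parts k + lam.parts j ≠ k + j + 1 := by
    intro k j
    rcases lt_or_ge j (lam.parts k) with h | h
    · have := (hgal k j).mpr h
      omega
    · have : ¬ (k < lam.parts j) := fun hc => absurd ((hgal k j).mp hc) (by omega)
      omega
  set f : ℕ → ℕ := fun i => lam.parts i + (a - 1 - i) with hf
  set F : Finset ℕ := (Finset.range a).image f with hF
  have hanti : ∀ i j, i < j → j < a → f j < f i := by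
    intro i j hij hja
    have h1 := lam.antitone i j (le_of_lt hij)
    have h2 := hpos j hja
    simp only [hf]
    omega
  have hfmem : ∀ i, i < a → f i ∈ F := by
    intro i hi
    exact Finset.mem_image.mpr ⟨i, Finset.mem_range.mpr hi, rfl⟩
  have hmemf : ∀ b ∈ F, ∃ i, i < a ∧ f i = b := by
    intro b hb
    obtain ⟨i, hi, hfi⟩ := Finset.mem_image.mp hb
    exact ⟨i, Finset.mem_range.mp hi, hfi⟩
  have hinj : Set.InjOn f (Finset.range a) := by
    intro i hi j hj hij
    simp only [Finset.coe_range, Set.mem_Iio] at hi hj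
    by_contra hne
    rcases lt_or_gt_of_ne hne with h | h
    · exact absurd hij (ne_of_gt (hanti i j h hj))
    · exact absurd hij (ne_of_lt (hanti j i h hi))
  have hcard : F.card = a := by
    rw [hF, Finset.card_image_of_injOn hinj, Finset.card_range]
  -- hooks inside a row
  have hookeq : ∀ i j, j < lam.parts i → lam.hook i j = lam.parts i + lam.parts j - (i + j + 1) := by
    intro i j hij
    have h1 := (hgal i j).mpr hij
    rw [hook, hsc j]
    omega
  have hookcol : ∀ i, i < a → lam.hook i 0 = f i := by
    intro i hi
    rw [hookeq i 0 (hpos i hi)]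
    have := hpos i hi
    simp only [hf]
    omega
  -- abacus surjectivity
  have habacus : ∀ i, i < a → ∀ m, m < f i → m ∉ F → ∃ j, j < lam.parts i ∧ lam.hook i j = f i - m := by
    intro i hia m hm hmF
    set c : ℕ → ℕ := fun j => a + j - lam.parts j with hc
    have hcmono : ∀ j1 j2, j1 < j2 → c j1 < c j2 := by
      intro j1 j2 h12
      have h1 := lam.antitone j1 j2 (le_of_lt h12)
      have h2 := hle j1
      simp only [hc]
      omega
    have hclt : ∀ j, j < lam.parts i → c j < f i := by
      intro j hj
      have h1 := (hgal i j).mpr hj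
      have h2 := hle j
      simp only [hc, hf]
      omega
    have hcnotF : ∀ j, c j ∉ F := by
      intro j hj
      obtain ⟨k, hk, hfk⟩ := hmemf _ hj
      have h2 := hle j
      have h3 := hle k
      apply hL7 k j
      simp only [hf, hc] at hfk
      omega
    set S : Finset ℕ := (Finset.range (f i)).filter (fun m => m ∉ F) with hS
    set T : Finset ℕ := (Finset.range (lam.parts i)).image c with hT
    have hTS : T ⊆ S := by
      intro x hx
      obtain ⟨j, hj, hcj⟩ := Finset.mem_image.mp hx
      rw [Finset.mem_range] at hj
      rw [hS, Finset.mem_filter, Finset.mem_range]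
      exact ⟨hcj ▸ hclt j hj, hcj ▸ hcnotF j⟩
    have hTcard : T.card = lam.parts i := by
      rw [hT, Finset.card_image_of_injOn, Finset.card_range]
      intro x hx y hy hxy
      by_contra hne
      rcases lt_or_gt_of_ne hne with h | h
      · exact absurd hxy (ne_of_lt (hcmono x y h))
      · exact absurd hxy (ne_of_gt (hcmono y x h))
    -- the elements of F below f i
    have hFbelow : (Finset.range (f i)).filter (fun m => m ∈ F) = (Finset.Ioo i a).image f := by
      ext x
      simp only [Finset.mem_filter, Finset.mem_range, Finset.mem_image, Finset.mem_Ioo]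
      constructor
      · rintro ⟨hxlt, hxF⟩
        obtain ⟨k, hk, hfk⟩ := hmemf x hxF
        refine ⟨k, ⟨?_, hk⟩, hfk⟩
        by_contra h
        push_neg at h
        rcases Nat.lt_or_ge k i with h' | h'
        · exact absurd (hfk ▸ hanti k i h' hia) (by omega)
        · have : k = i := le_antisymm h h'
          subst this
          omega
      · rintro ⟨k, ⟨hik, hka⟩, hfk⟩
        exact ⟨hfk ▸ hanti i k hik hka, hfk ▸ hfmem k hka⟩
    have hScard : S.card = lam.parts i := by
      have hsplit := Finset.card_filter_add_card_filter_not
        (s := Finset.range (f i)) (p := fun m => m ∈ F)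
      rw [hFbelow] at hsplit
      have hioo : ((Finset.Ioo i a).image f).card = a - 1 - i := by
        rw [Finset.card_image_of_injOn, Nat.card_Ioo]
        · omega
        · intro x hx y hy hxy
          simp only [Finset.coe_Ioo, Set.mem_Ioo] at hx hy
          exact hinj (by simp; omega) (by simp; omega) hxy
      rw [hioo, Finset.card_range] at hsplit
      have hfi : f i = lam.parts i + (a - 1 - i) := rfl
      rw [hS]
      omega
    have hST : S = T := (Finset.eq_of_subset_of_card_le hTS (by omega)).symm
    have hmS : m ∈ S := by
      rw [hS, Finset.mem_filter, Finset.mem_range]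
      exact ⟨hm, hmF⟩
    rw [hST, hT] at hmS
    obtain ⟨j, hj, hcj⟩ := Finset.mem_image.mp hmS
    rw [Finset.mem_range] at hj
    refine ⟨j, hj, ?_⟩
    rw [hookeq i j hj]
    have h1 := (hgal i j).mpr hj
    have h2 := hle j
    simp only [hc] at hcj
    simp only [hf]
    omega
  -- closure under subtraction
  have hclosure : ∀ s, (lam.IsCore s) → ∀ b ∈ F, s < b → b - s ∈ F := by
    intro s hcore b hb hsb
    rcases Nat.eq_zero_or_pos s with hs0 | hs0
    · simpa [hs0] using hb
    obtain ⟨i, hia, hfi⟩ := hmemf b hb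
    by_contra hnot
    have hbs : b - s < f i := by rw [hfi]; omega
    obtain ⟨j, hj, hhook⟩ := habacus i hia (b - s) hbs (hfi ▸ hnot)
    have : lam.hook i j = s := by rw [hhook, hfi]; omega
    exact hcore i j hj (this ▸ dvd_refl s)
  refine ⟨F, hcard, ?_, ?_, hclosure t hcore1, hclosure (t+1) hcore2, ?_, ?_, ?_, ?_⟩
  · have : f 0 = 2 * a - 1 := by simp only [hf]; omega
    exact this ▸ hfmem 0 ha
  · intro b hb
    obtain ⟨i, hia, hfi⟩ := hmemf b hb
    have h1 := hpos i hia
    constructor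
    · simp only [hf] at hfi; omega
    · rcases Nat.eq_zero_or_pos i with h | h
      · subst h; simp only [hf] at hfi; omega
      · have := hanti 0 i h hia
        simp only [hf] at hfi this ⊢
        omega
  · intro b hb
    obtain ⟨i, hia, hfi⟩ := hmemf b hb
    have hcell : lam.IsCell i 0 := hpos i hia
    have h1 := hcore1 i 0 hcell
    have h2 := hcore2 i 0 hcell
    rw [hookcol i hia, hfi] at h1 h2
    exact ⟨h1, h2⟩
  · intro b hb c hc
    obtain ⟨k, hka, hfk⟩ := hmemf b hb
    obtain ⟨j, hja, hfj⟩ := hmemf c hc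
    intro heq
    apply hL7 k j
    have h2 := hle k
    have h3 := hle j
    simp only [hf] at hfk hfj
    omega
  -- distinctness condition
  · intro b hab hbF hb1F
    obtain ⟨j, hja, hfj⟩ := hmemf b hbF
    obtain ⟨i, hia, hfi⟩ := hmemf (b+1) hb1F
    have hij : i < j := by
      by_contra h
      push_neg at h
      rcases Nat.lt_or_ge j i with h' | h'
      · have := hanti j i h' hia; omega
      · have : i = j := le_antisymm h' h
        subst this
        omega
    have hji : j = i + 1 := by
      by_contra h
      have h1 : i + 1 < j := by omega
      have h2 := hanti i (i+1) (by omega) (by omega)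
      have h3 := hanti (i+1) j h1 hja
      omega
    subst hji
    have hpij : lam.parts i = lam.parts (i+1) := by
      simp only [hf] at hfi hfj
      omega
    have hdj : i + 1 < lam.durfee := by
      rw [lam.durfee_iff]
      simp only [hf] at hfj
      omega
    have hdi : i < lam.durfee := by
      rw [lam.durfee_iff]
      rw [lam.durfee_iff] at hdj
      omega
    exact hdist i (i+1) hdi hdj (by omega) hpij
  -- size computation
  · have hsize : lam.size = ∑ i ∈ Finset.range a, lam.parts i := by
      rw [size]
      apply finsum_eq_sum_of_support_subset
      intro x hx
      simp only [Function.mem_support] at hx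
      simp only [Finset.coe_range, Set.mem_Iio]
      by_contra h
      push_neg at h
      exact hx (hzero x h)
    have hsumF : ∑ b ∈ F, b = ∑ i ∈ Finset.range a, f i := by
      rw [hF, Finset.sum_image (fun x hx y hy h => hinj (by simpa using hx) (by simpa using hy) h)]
    have hrefl : ∑ i ∈ Finset.range a, (a - 1 - i) = ∑ i ∈ Finset.range a, i := by
      rcases Nat.eq_zero_or_pos a with h | h
      · simp [h]
      · have := Finset.sum_range_reflect (fun i => i) a
        calc ∑ i ∈ Finset.range a, (a - 1 - i) = ∑ i ∈ Finset.range a, (a - 1 - (i : ℕ)) := rfl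
          _ = ∑ i ∈ Finset.range a, i := by
              rw [← this]
    rw [hsumF, hsize]
    have : ∑ i ∈ Finset.range a, f i
        = ∑ i ∈ Finset.range a, lam.parts i + ∑ i ∈ Finset.range a, (a - 1 - i) := by
      rw [← Finset.sum_add_distrib]
    rw [this, hrefl]

/-- The partition `(n, 1, 1, ..., 1)` with `n - 1` ones (empty if `n = 0`). -/
def stair (n : ℕ) : IntPartition where
  parts := fun i => if i = 0 then n else if i < n then 1 else 0
  antitone := by
    intro i j hij
    split_ifs <;> omega
  finite := ⟨n + 1, by intro i hi; split_ifs <;> omega⟩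

@[simp] lemma stair_parts (n i : ℕ) :
    (stair n).parts i = if i = 0 then n else if i < n then 1 else 0 := rfl

lemma stair_parts_zero (n : ℕ) : (stair n).parts 0 = n := rfl

lemma stair_conj (n : ℕ) (j : ℕ) : (stair n).conjParts j = (stair n).parts j := by
  rw [conjParts]
  rcases Nat.eq_zero_or_pos n with hn | hn
  · subst hn
    have h : {i : ℕ | j < (stair 0).parts i} = ∅ := by
      ext i; simp only [Set.mem_setOf_eq, stair_parts, Set.mem_empty_iff_false, iff_false]
      split_ifs <;> omega
    rw [h]
    simp only [Nat.card_eq_fintype_card, Fintype.card_eq_zero]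
    simp only [stair_parts]
    split_ifs <;> omega
  rcases Nat.eq_zero_or_pos j with hj | hj
  · subst hj
    have h : {i : ℕ | 0 < (stair n).parts i} = Set.Iio n := by
      ext i
      simp only [Set.mem_setOf_eq, stair_parts, Set.mem_Iio]
      split_ifs <;> omega
    rw [h]
    simp only [Nat.card_eq_card_toFinset, Set.toFinset_Iio, Nat.card_Iio, stair_parts]
    split_ifs <;> omega
  rcases Nat.lt_or_ge j n with hjn | hjn
  · have h : {i : ℕ | j < (stair n).parts i} = Set.Iio 1 := by
      ext i
      simp only [Set.mem_setOf_eq, stair_parts, Set.mem_Iio]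
      split_ifs <;> omega
    rw [h]
    simp only [Nat.card_eq_card_toFinset, Set.toFinset_Iio, Nat.card_Iio, stair_parts]
    split_ifs <;> omega
  · have h : {i : ℕ | j < (stair n).parts i} = ∅ := by
      ext i
      simp only [Set.mem_setOf_eq, stair_parts, Set.mem_empty_iff_false, iff_false]
      split_ifs <;> omega
    rw [h]
    simp only [Nat.card_eq_fintype_card, Fintype.card_eq_zero]
    simp only [stair_parts]
    split_ifs <;> omega

lemma stair_selfConj (n : ℕ) : (stair n).IsSelfConjugate := stair_conj n

lemma stair_hook (n : ℕ) (i j : ℕ) (hcell : (stair n).IsCell i j) :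
    ((stair n).hook i j = 2 * n - 1 ∧ i = 0 ∧ j = 0) ∨
    ((stair n).hook i j = n - j ∧ i = 0 ∧ 1 ≤ j ∧ j < n) ∨
    ((stair n).hook i j = n - i ∧ j = 0 ∧ 1 ≤ i ∧ i < n) := by
  have hc : j < (stair n).parts i := hcell
  rw [hook, stair_conj n j]
  rcases Nat.eq_zero_or_pos i with hi | hi
  · subst hi
    rw [stair_parts_zero] at hc
    rcases Nat.eq_zero_or_pos j with hj | hj
    · subst hj
      left
      refine ⟨?_, rfl, rfl⟩
      rw [stair_parts_zero]
      omega
    · right; left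
      have hpj : (stair n).parts j = 1 := by
        simp only [stair_parts]
        split_ifs <;> omega
      rw [stair_parts_zero, hpj]
      exact ⟨by omega, rfl, by omega, hc⟩
  · right; right
    have h1 : i ≠ 0 := by omega
    have hpi1 : (stair n).parts i ≤ 1 := by
      simp only [stair_parts]; split_ifs <;> omega
    have hj0 : j = 0 := by omega
    subst hj0
    have hin : i < n := by
      by_contra hge
      have : (stair n).parts i = 0 := by
        simp only [stair_parts]; split_ifs <;> omega
      omega
    have hpi : (stair n).parts i = 1 := by
      simp only [stair_parts]; split_ifs <;> omega
    rw [hpi, stair_parts_zero]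
    exact ⟨by omega, rfl, by omega, hin⟩

lemma stair_core (n s : ℕ) (h1 : ¬ s ∣ (2 * n - 1)) (h2 : ∀ m, 1 ≤ m → m < n → ¬ s ∣ m) :
    (stair n).IsCore s := by
  intro i j hcell
  rcases stair_hook n i j hcell with ⟨h, _, _⟩ | ⟨h, _, hj1, hjn⟩ | ⟨h, _, hi1, hin⟩
  · rw [h]; exact h1
  · rw [h]; exact h2 (n - j) (by omega) (by omega)
  · rw [h]; exact h2 (n - i) (by omega) (by omega)

lemma stair_durfee (n : ℕ) (hn : 1 ≤ n) : (stair n).durfee = 1 := by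
  have h0 : 0 < (stair n).durfee := by
    rw [durfee_iff]
    rw [stair_parts_zero]
    omega
  have h1 : ¬ 1 < (stair n).durfee := by
    intro h
    rw [durfee_iff] at h
    have hp : (stair n).parts 1 ≤ 1 := by
      simp only [stair_parts]
      norm_num
      split_ifs <;> omega
    omega
  omega

lemma stair_size (n : ℕ) (hn : 1 ≤ n) : (stair n).size = 2 * n - 1 := by
  rw [size]
  have hsupp : (Function.support (stair n).parts) ⊆ ↑(Finset.range n) := by
    intro x hx
    simp only [Function.mem_support, stair_parts] at hx
    simp only [Finset.coe_range, Set.mem_Iio]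
    split_ifs at hx <;> omega
  rw [finsum_eq_sum_of_support_subset _ hsupp]
  have h0 : 0 ∈ Finset.range n := Finset.mem_range.mpr hn
  rw [← Finset.add_sum_erase _ _ h0]
  have hone : ∀ x ∈ (Finset.range n).erase 0, (stair n).parts x = 1 := by
    intro x hx
    simp only [Finset.mem_erase, Finset.mem_range] at hx
    simp only [stair_parts]
    split_ifs <;> omega
  rw [Finset.sum_congr rfl hone, Finset.sum_const, smul_eq_mul, mul_one,
    Finset.card_erase_of_mem h0, Finset.card_range, stair_parts_zero]
  omega

lemma stair_inDS (t : ℕ) (ht : 3 ≤ t) : (stair t).InDS t := by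
  refine ⟨stair_selfConj t, ?_, ?_, ?_⟩
  · apply stair_core
    · intro ⟨k, hk⟩
      rcases Nat.lt_or_ge k 2 with h | h
      · interval_cases k <;> omega
      · have : 2 * t ≤ t * k := by
          calc 2 * t = t * 2 := by ring
          _ ≤ t * k := Nat.mul_le_mul_left t h
        omega
    · intro m hm1 hmt hdvd
      exact absurd (Nat.le_of_dvd (by omega) hdvd) (by omega)
  · apply stair_core
    · intro ⟨k, hk⟩
      rcases Nat.lt_or_ge k 2 with h | h
      · interval_cases k <;> omega
      · have : 2 * (t + 1) ≤ (t + 1) * k := by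
          calc 2 * (t + 1) = (t + 1) * 2 := by ring
          _ ≤ (t + 1) * k := Nat.mul_le_mul_left (t + 1) h
        omega
    · intro m hm1 hmt hdvd
      exact absurd (Nat.le_of_dvd (by omega) hdvd) (by omega)
  · intro i j hi hj
    rw [stair_durfee t (by omega)] at hi hj
    omega

lemma stair_one_inDS2 : (stair 1).InDS 2 := by
  refine ⟨stair_selfConj 1, ?_, ?_, ?_⟩
  · apply stair_core
    · decide
    · intro m h1 h2; omega
  · apply stair_core
    · decide
    · intro m h1 h2; omega
  · intro i j hi hj
    rw [stair_durfee 1 (by omega)] at hi hj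
    omega

lemma stair_zero_inDS1 : (stair 0).InDS 1 := by
  refine ⟨stair_selfConj 0, ?_, ?_, ?_⟩
  · intro i j hcell
    have : j < (stair 0).parts i := hcell
    simp only [stair_parts] at this
    split_ifs at this <;> omega
  · intro i j hcell
    have : j < (stair 0).parts i := hcell
    simp only [stair_parts] at this
    split_ifs at this <;> omega
  · intro i j hi hj
    have h0 : (stair 0).durfee = 0 := by
      by_contra h
      have h2 : 0 < (stair 0).durfee := by omega
      rw [durfee_iff, stair_parts_zero] at h2
      omega
    omega

lemma stair_zero_size : (stair 0).size = 0 := by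
  rw [size]
  have : (stair 0).parts = fun _ => 0 := by
    funext i
    simp only [stair_parts]
    split_ifs <;> omega
  rw [this]
  exact finsum_zero


lemma size_eq_zero' (lam : IntPartition) (h : lam.parts 0 = 0) : lam.size = 0 := by
  rw [size]
  have hz : lam.parts = fun _ => 0 := by
    funext i
    have := lam.antitone 0 i (Nat.zero_le i)
    omega
  rw [hz]
  exact finsum_zero

end IntPartition

section Arith

lemma sum_le_of_subset {F A : Finset ℕ} (h : F ⊆ A) : ∑ b ∈ F, b ≤ ∑ b ∈ A, b :=
  Finset.sum_le_sum_of_subset h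

lemma nonrep2 (F : Finset ℕ) (a : ℕ)
    (hbnd : ∀ b ∈ F, 1 ≤ b ∧ b ≤ 2 * a - 1)
    (hsub1 : ∀ b ∈ F, 2 < b → b - 2 ∈ F)
    (hdvd : ∀ b ∈ F, ¬ 2 ∣ b ∧ ¬ 3 ∣ b) :
    ∀ b, b ∈ F → ∀ x y : ℕ, b = 2 * x + 3 * y → x + y = 0 := by
  intro b
  induction b using Nat.strong_induction_on with
  | _ b ih =>
    intro hbF x y hxy
    by_contra hne
    have hb1 := (hbnd b hbF).1
    have hd := hdvd b hbF
    rcases Nat.eq_zero_or_pos x with hx | hx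
    · exact hd.2 ⟨y, by omega⟩
    · rcases Nat.lt_or_ge b 3 with hb | hb
      · exact hd.1 ⟨1, by omega⟩
      · have h5 : b - 2 ∈ F := hsub1 b hbF (by omega)
        have hb5 := (hbnd _ h5).1
        have := ih (b - 2) (by omega) h5 (x - 1) y (by omega)
        omega

lemma nonrep3 (F : Finset ℕ) (a : ℕ)
    (hbnd : ∀ b ∈ F, 1 ≤ b ∧ b ≤ 2 * a - 1)
    (hsub1 : ∀ b ∈ F, 3 < b → b - 3 ∈ F)
    (hdvd : ∀ b ∈ F, ¬ 3 ∣ b ∧ ¬ 4 ∣ b) :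
    ∀ b, b ∈ F → ∀ x y : ℕ, b = 3 * x + 4 * y → x + y = 0 := by
  intro b
  induction b using Nat.strong_induction_on with
  | _ b ih =>
    intro hbF x y hxy
    by_contra hne
    have hb1 := (hbnd b hbF).1
    have hd := hdvd b hbF
    rcases Nat.eq_zero_or_pos x with hx | hx
    · exact hd.2 ⟨y, by omega⟩
    · rcases Nat.lt_or_ge b 4 with hb | hb
      · exact hd.1 ⟨1, by omega⟩
      · have h5 : b - 3 ∈ F := hsub1 b hbF (by omega)
        have hb5 := (hbnd _ h5).1
        have := ih (b - 3) (by omega) h5 (x - 1) y (by omega)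
        omega

lemma nonrep4 (F : Finset ℕ) (a : ℕ)
    (hbnd : ∀ b ∈ F, 1 ≤ b ∧ b ≤ 2 * a - 1)
    (hsub1 : ∀ b ∈ F, 4 < b → b - 4 ∈ F)
    (hdvd : ∀ b ∈ F, ¬ 4 ∣ b ∧ ¬ 5 ∣ b) :
    ∀ b, b ∈ F → ∀ x y : ℕ, b = 4 * x + 5 * y → x + y = 0 := by
  intro b
  induction b using Nat.strong_induction_on with
  | _ b ih =>
    intro hbF x y hxy
    by_contra hne
    have hb1 := (hbnd b hbF).1
    have hd := hdvd b hbF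
    rcases Nat.eq_zero_or_pos x with hx | hx
    · exact hd.2 ⟨y, by omega⟩
    · rcases Nat.lt_or_ge b 5 with hb | hb
      · exact hd.1 ⟨1, by omega⟩
      · have h5 : b - 4 ∈ F := hsub1 b hbF (by omega)
        have hb5 := (hbnd _ h5).1
        have := ih (b - 4) (by omega) h5 (x - 1) y (by omega)
        omega

lemma nonrep5 (F : Finset ℕ) (a : ℕ)
    (hbnd : ∀ b ∈ F, 1 ≤ b ∧ b ≤ 2 * a - 1)
    (hsub1 : ∀ b ∈ F, 5 < b → b - 5 ∈ F)
    (hdvd : ∀ b ∈ F, ¬ 5 ∣ b ∧ ¬ 6 ∣ b) :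
    ∀ b, b ∈ F → ∀ x y : ℕ, b = 5 * x + 6 * y → x + y = 0 := by
  intro b
  induction b using Nat.strong_induction_on with
  | _ b ih =>
    intro hbF x y hxy
    by_contra hne
    have hb1 := (hbnd b hbF).1
    have hd := hdvd b hbF
    rcases Nat.eq_zero_or_pos x with hx | hx
    · exact hd.2 ⟨y, by omega⟩
    · rcases Nat.lt_or_ge b 6 with hb | hb
      · exact hd.1 ⟨1, by omega⟩
      · have h5 : b - 5 ∈ F := hsub1 b hbF (by omega)
        have hb5 := (hbnd _ h5).1
        have := ih (b - 5) (by omega) h5 (x - 1) y (by omega)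
        omega

lemma arith2 (F : Finset ℕ) (a n : ℕ)
    (hcard : F.card = a) (ha : 1 ≤ a) (hmem : (2 * a - 1) ∈ F)
    (hbnd : ∀ b ∈ F, 1 ≤ b ∧ b ≤ 2 * a - 1)
    (hsub1 : ∀ b ∈ F, 2 < b → b - 2 ∈ F)
    (hsub2 : ∀ b ∈ F, 3 < b → b - 3 ∈ F)
    (hdvd : ∀ b ∈ F, ¬ 2 ∣ b ∧ ¬ 3 ∣ b)
    (hC4 : ∀ b ∈ F, ∀ c ∈ F, b + c ≠ 2 * a - 1)
    (hC5 : ∀ b, a ≤ b → b ∈ F → b + 1 ∈ F → False)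
    (hsum : n + ∑ i ∈ Finset.range a, i = ∑ b ∈ F, b) :
    n ≤ 1 := by
  have hnr := nonrep2 F a hbnd hsub1 hdvd
  have ha1 : a = 1 := by
    by_contra h
    have := hnr (2 * a - 1) hmem (a - 2) 1 (by omega)
    omega
  subst ha1
  have hFsub : F ⊆ {1} := by
    intro b hb; have := hbnd b hb; simp only [Finset.mem_singleton]; omega
  have hs : ∑ b ∈ F, b ≤ ∑ b ∈ ({1} : Finset ℕ), b := sum_le_of_subset hFsub
  have h1 : ∑ b ∈ ({1} : Finset ℕ), b = 1 := by decide
  have h2 : ∑ i ∈ Finset.range 1, i = 0 := by decide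
  omega

lemma arith3 (F : Finset ℕ) (a n : ℕ)
    (hcard : F.card = a) (ha : 1 ≤ a) (hmem : (2 * a - 1) ∈ F)
    (hbnd : ∀ b ∈ F, 1 ≤ b ∧ b ≤ 2 * a - 1)
    (hsub1 : ∀ b ∈ F, 3 < b → b - 3 ∈ F)
    (hsub2 : ∀ b ∈ F, 4 < b → b - 4 ∈ F)
    (hdvd : ∀ b ∈ F, ¬ 3 ∣ b ∧ ¬ 4 ∣ b)
    (hC4 : ∀ b ∈ F, ∀ c ∈ F, b + c ≠ 2 * a - 1)
    (hC5 : ∀ b, a ≤ b → b ∈ F → b + 1 ∈ F → False)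
    (hsum : n + ∑ i ∈ Finset.range a, i = ∑ b ∈ F, b) :
    n ≤ 5 := by
  have hnr := nonrep3 F a hbnd hsub1 hdvd
  have h3 : (3:ℕ) ∉ F := fun h => by have := hnr 3 h 1 0 (by norm_num); omega
  have h4 : (4:ℕ) ∉ F := fun h => by have := hnr 4 h 0 1 (by norm_num); omega
  have haub : a ≤ 3 := by
    by_contra h
    push_neg at h
    have := hnr (2 * a - 1) hmem ((2 * a - 1) / 3 - (2 * a - 1) % 3) ((2 * a - 1) % 3) (by omega)
    omega
  interval_cases a
  · have hFsub : F ⊆ {1} := by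
      intro b hb; have := hbnd b hb; simp only [Finset.mem_singleton]; omega
    have hs : ∑ b ∈ F, b ≤ ∑ b ∈ ({1} : Finset ℕ), b := sum_le_of_subset hFsub
    have h1 : ∑ b ∈ ({1} : Finset ℕ), b = 1 := by decide
    have h2 : ∑ i ∈ Finset.range 1, i = 0 := by decide
    omega
  · -- a = 2 : 3 ∈ F
    norm_num at hmem
    exact absurd hmem h3
  · -- a = 3
    have hFsub : F ⊆ {1, 2, 5} := by
      intro b hb
      have hbb := hbnd b hb
      have hb3 : b ≠ 3 := fun h => h3 (h ▸ hb)
      have hb4 : b ≠ 4 := fun h => h4 (h ▸ hb)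
      simp only [Finset.mem_insert, Finset.mem_singleton]
      omega
    have hs : ∑ b ∈ F, b ≤ ∑ b ∈ ({1, 2, 5} : Finset ℕ), b := sum_le_of_subset hFsub
    have h1 : ∑ b ∈ ({1, 2, 5} : Finset ℕ), b = 8 := by decide
    have h2 : ∑ i ∈ Finset.range 3, i = 3 := by decide
    omega

lemma arith4 (F : Finset ℕ) (a n : ℕ)
    (hcard : F.card = a) (ha : 1 ≤ a) (hmem : (2 * a - 1) ∈ F)
    (hbnd : ∀ b ∈ F, 1 ≤ b ∧ b ≤ 2 * a - 1)
    (hsub1 : ∀ b ∈ F, 4 < b → b - 4 ∈ F)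
    (hsub2 : ∀ b ∈ F, 5 < b → b - 5 ∈ F)
    (hdvd : ∀ b ∈ F, ¬ 4 ∣ b ∧ ¬ 5 ∣ b)
    (hC4 : ∀ b ∈ F, ∀ c ∈ F, b + c ≠ 2 * a - 1)
    (hC5 : ∀ b, a ≤ b → b ∈ F → b + 1 ∈ F → False)
    (hsum : n + ∑ i ∈ Finset.range a, i = ∑ b ∈ F, b) :
    n ≤ 7 := by
  have hnr := nonrep4 F a hbnd hsub1 hdvd
  have h4 : (4:ℕ) ∉ F := fun h => by have := hnr 4 h 1 0 (by norm_num); omega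
  have h5 : (5:ℕ) ∉ F := fun h => by have := hnr 5 h 0 1 (by norm_num); omega
  have h8 : (8:ℕ) ∉ F := fun h => by have := hnr 8 h 2 0 (by norm_num); omega
  have h9 : (9:ℕ) ∉ F := fun h => by have := hnr 9 h 1 1 (by norm_num); omega
  have h10 : (10:ℕ) ∉ F := fun h => by have := hnr 10 h 0 2 (by norm_num); omega
  have haub : a ≤ 6 := by
    by_contra h
    push_neg at h
    have := hnr (2 * a - 1) hmem ((2 * a - 1) / 4 - (2 * a - 1) % 4) ((2 * a - 1) % 4) (by omega)
    omega
  interval_cases a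
  · have hFsub : F ⊆ {1} := by
      intro b hb; have := hbnd b hb; simp only [Finset.mem_singleton]; omega
    have hs : ∑ b ∈ F, b ≤ ∑ b ∈ ({1} : Finset ℕ), b := sum_le_of_subset hFsub
    have h1 : ∑ b ∈ ({1} : Finset ℕ), b = 1 := by decide
    have h2 : ∑ i ∈ Finset.range 1, i = 0 := by decide
    omega
  · -- a = 2
    have hFsub : F ⊆ {1, 2, 3} := by
      intro b hb
      have hbb := hbnd b hb
      simp only [Finset.mem_insert, Finset.mem_singleton]
      omega
    have hs : ∑ b ∈ F, b ≤ ∑ b ∈ ({1, 2, 3} : Finset ℕ), b := sum_le_of_subset hFsub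
    have h1 : ∑ b ∈ ({1, 2, 3} : Finset ℕ), b = 6 := by decide
    have h2 : ∑ i ∈ Finset.range 2, i = 1 := by decide
    omega
  · -- a = 3 : 5 ∈ F
    norm_num at hmem
    exact absurd hmem h5
  · -- a = 4 : 7 ∈ F
    have hm7 : (7:ℕ) ∈ F := by norm_num at hmem; exact hmem
    have hm3 : (3:ℕ) ∈ F := by have := hsub1 7 hm7 (by norm_num); norm_num at this; exact this
    have hm2 : (2:ℕ) ∈ F := by have := hsub2 7 hm7 (by norm_num); norm_num at this; exact this
    have h6 : (6:ℕ) ∉ F := by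
      intro h6
      have hm1 : (1:ℕ) ∈ F := by have := hsub2 6 h6 (by norm_num); norm_num at this; exact this
      have hsubF : ({7, 6, 3, 2, 1} : Finset ℕ) ⊆ F := by
        intro x hx; fin_cases hx <;> assumption
      have := Finset.card_le_card hsubF
      have hc5 : ({7, 6, 3, 2, 1} : Finset ℕ).card = 5 := by decide
      omega
    have hFsub : F ⊆ {1, 2, 3, 7} := by
      intro b hb
      have hbb := hbnd b hb
      have hb4 : b ≠ 4 := fun h => h4 (h ▸ hb)
      have hb5 : b ≠ 5 := fun h => h5 (h ▸ hb)
      have hb6 : b ≠ 6 := fun h => h6 (h ▸ hb)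
      simp only [Finset.mem_insert, Finset.mem_singleton]
      omega
    have hs : ∑ b ∈ F, b ≤ ∑ b ∈ ({1, 2, 3, 7} : Finset ℕ), b := sum_le_of_subset hFsub
    have h1 : ∑ b ∈ ({1, 2, 3, 7} : Finset ℕ), b = 13 := by decide
    have h2 : ∑ i ∈ Finset.range 4, i = 6 := by decide
    omega
  · -- a = 5 : 9 ∈ F
    norm_num at hmem
    exact absurd hmem h9
  · -- a = 6 : 11 ∈ F
    have hm11 : (11:ℕ) ∈ F := by norm_num at hmem; exact hmem
    have hm7 : (7:ℕ) ∈ F := by have := hsub1 11 hm11 (by norm_num); norm_num at this; exact this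
    have hm6 : (6:ℕ) ∈ F := by have := hsub2 11 hm11 (by norm_num); norm_num at this; exact this
    exact absurd (hC5 6 (by norm_num) hm6 (by norm_num; exact hm7)) (fun h => h)

lemma arith5 (F : Finset ℕ) (a n : ℕ)
    (hcard : F.card = a) (ha : 1 ≤ a) (hmem : (2 * a - 1) ∈ F)
    (hbnd : ∀ b ∈ F, 1 ≤ b ∧ b ≤ 2 * a - 1)
    (hsub1 : ∀ b ∈ F, 5 < b → b - 5 ∈ F)
    (hsub2 : ∀ b ∈ F, 6 < b → b - 6 ∈ F)
    (hdvd : ∀ b ∈ F, ¬ 5 ∣ b ∧ ¬ 6 ∣ b)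
    (hC4 : ∀ b ∈ F, ∀ c ∈ F, b + c ≠ 2 * a - 1)
    (hC5 : ∀ b, a ≤ b → b ∈ F → b + 1 ∈ F → False)
    (hsum : n + ∑ i ∈ Finset.range a, i = ∑ b ∈ F, b) :
    n ≤ 9 := by
  have hnr := nonrep5 F a hbnd hsub1 hdvd
  have h5 : (5:ℕ) ∉ F := fun h => by have := hnr 5 h 1 0 (by norm_num); omega
  have h6 : (6:ℕ) ∉ F := fun h => by have := hnr 6 h 0 1 (by norm_num); omega
  have h11 : (11:ℕ) ∉ F := fun h => by have := hnr 11 h 1 1 (by norm_num); omega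
  have h15 : (15:ℕ) ∉ F := fun h => by have := hnr 15 h 3 0 (by norm_num); omega
  have h17 : (17:ℕ) ∉ F := fun h => by have := hnr 17 h 1 2 (by norm_num); omega
  have haub : a ≤ 10 := by
    by_contra h
    push_neg at h
    have := hnr (2 * a - 1) hmem ((2 * a - 1) / 5 - (2 * a - 1) % 5) ((2 * a - 1) % 5) (by omega)
    omega
  interval_cases a
  · have hFsub : F ⊆ {1} := by
      intro b hb; have := hbnd b hb; simp only [Finset.mem_singleton]; omega
    have hs : ∑ b ∈ F, b ≤ ∑ b ∈ ({1} : Finset ℕ), b := sum_le_of_subset hFsub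
    have h1 : ∑ b ∈ ({1} : Finset ℕ), b = 1 := by decide
    have h2 : ∑ i ∈ Finset.range 1, i = 0 := by decide
    omega
  · -- a = 2
    have hFsub : F ⊆ {1, 2, 3} := by
      intro b hb
      have hbb := hbnd b hb
      simp only [Finset.mem_insert, Finset.mem_singleton]
      omega
    have hs : ∑ b ∈ F, b ≤ ∑ b ∈ ({1, 2, 3} : Finset ℕ), b := sum_le_of_subset hFsub
    have h1 : ∑ b ∈ ({1, 2, 3} : Finset ℕ), b = 6 := by decide
    have h2 : ∑ i ∈ Finset.range 2, i = 1 := by decide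
    omega
  · -- a = 3 : 5 ∈ F
    norm_num at hmem
    exact absurd hmem h5
  · -- a = 4 : 7 ∈ F
    have hm7 : (7:ℕ) ∈ F := by norm_num at hmem; exact hmem
    have hm2 : (2:ℕ) ∈ F := by have := hsub1 7 hm7 (by norm_num); norm_num at this; exact this
    have hm1 : (1:ℕ) ∈ F := by have := hsub2 7 hm7 (by norm_num); norm_num at this; exact this
    by_cases h3 : (3:ℕ) ∈ F
    · have h4 : (4:ℕ) ∉ F := by
        intro h4
        have hsubF : ({7, 4, 3, 2, 1} : Finset ℕ) ⊆ F := by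
          intro x hx; fin_cases hx <;> assumption
        have := Finset.card_le_card hsubF
        have hc5 : ({7, 4, 3, 2, 1} : Finset ℕ).card = 5 := by decide
        omega
      have hFsub : F ⊆ {1, 2, 3, 7} := by
        intro b hb
        have hbb := hbnd b hb
        have hb4 : b ≠ 4 := fun h => h4 (h ▸ hb)
        have hb5 : b ≠ 5 := fun h => h5 (h ▸ hb)
        have hb6 : b ≠ 6 := fun h => h6 (h ▸ hb)
        simp only [Finset.mem_insert, Finset.mem_singleton]
        omega
      have hs : ∑ b ∈ F, b ≤ ∑ b ∈ ({1, 2, 3, 7} : Finset ℕ), b := sum_le_of_subset hFsub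
      have h1 : ∑ b ∈ ({1, 2, 3, 7} : Finset ℕ), b = 13 := by decide
      have h2 : ∑ i ∈ Finset.range 4, i = 6 := by decide
      omega
    · have hFsub : F ⊆ {1, 2, 4, 7} := by
        intro b hb
        have hbb := hbnd b hb
        have hb3 : b ≠ 3 := fun h => h3 (h ▸ hb)
        have hb5 : b ≠ 5 := fun h => h5 (h ▸ hb)
        have hb6 : b ≠ 6 := fun h => h6 (h ▸ hb)
        simp only [Finset.mem_insert, Finset.mem_singleton]
        omega
      have hs : ∑ b ∈ F, b ≤ ∑ b ∈ ({1, 2, 4, 7} : Finset ℕ), b := sum_le_of_subset hFsub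
      have h1 : ∑ b ∈ ({1, 2, 4, 7} : Finset ℕ), b = 14 := by decide
      have h2 : ∑ i ∈ Finset.range 4, i = 6 := by decide
      omega
  · -- a = 5 : 9 ∈ F
    have hm9 : (9:ℕ) ∈ F := by norm_num at hmem; exact hmem
    have hm4 : (4:ℕ) ∈ F := by have := hsub1 9 hm9 (by norm_num); norm_num at this; exact this
    have hm3 : (3:ℕ) ∈ F := by have := hsub2 9 hm9 (by norm_num); norm_num at this; exact this
    have h7 : (7:ℕ) ∉ F := by
      intro h7
      have hm2 : (2:ℕ) ∈ F := by have := hsub1 7 h7 (by norm_num); norm_num at this; exact this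
      have hm1 : (1:ℕ) ∈ F := by have := hsub2 7 h7 (by norm_num); norm_num at this; exact this
      have hsubF : ({9, 7, 4, 3, 2, 1} : Finset ℕ) ⊆ F := by
        intro x hx; fin_cases hx <;> assumption
      have := Finset.card_le_card hsubF
      have hc6 : ({9, 7, 4, 3, 2, 1} : Finset ℕ).card = 6 := by decide
      omega
    have h8 : (8:ℕ) ∉ F := by
      intro h8
      exact hC5 8 (by norm_num) h8 (by norm_num; exact hm9)
    have hFsub : F ⊆ {1, 2, 3, 4, 9} := by
      intro b hb
      have hbb := hbnd b hb
      have hb5 : b ≠ 5 := fun h => h5 (h ▸ hb)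
      have hb6 : b ≠ 6 := fun h => h6 (h ▸ hb)
      have hb7 : b ≠ 7 := fun h => h7 (h ▸ hb)
      have hb8 : b ≠ 8 := fun h => h8 (h ▸ hb)
      simp only [Finset.mem_insert, Finset.mem_singleton]
      omega
    have hs : ∑ b ∈ F, b ≤ ∑ b ∈ ({1, 2, 3, 4, 9} : Finset ℕ), b := sum_le_of_subset hFsub
    have h1 : ∑ b ∈ ({1, 2, 3, 4, 9} : Finset ℕ), b = 19 := by decide
    have h2 : ∑ i ∈ Finset.range 5, i = 10 := by decide
    omega
  · -- a = 6 : 11 ∈ F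
    norm_num at hmem
    exact absurd hmem h11
  · -- a = 7 : 13 ∈ F
    have hm13 : (13:ℕ) ∈ F := by norm_num at hmem; exact hmem
    have hm8 : (8:ℕ) ∈ F := by have := hsub1 13 hm13 (by norm_num); norm_num at this; exact this
    have hm7 : (7:ℕ) ∈ F := by have := hsub2 13 hm13 (by norm_num); norm_num at this; exact this
    exact absurd (hC5 7 (by norm_num) hm7 (by norm_num; exact hm8)) (fun h => h)
  · -- a = 8 : 15 ∈ F
    norm_num at hmem
    exact absurd hmem h15
  · -- a = 9 : 17 ∈ F
    norm_num at hmem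
    exact absurd hmem h17
  · -- a = 10 : 19 ∈ F
    have hm19 : (19:ℕ) ∈ F := by norm_num at hmem; exact hmem
    have hm14 : (14:ℕ) ∈ F := by have := hsub1 19 hm19 (by norm_num); norm_num at this; exact this
    have hm13 : (13:ℕ) ∈ F := by have := hsub2 19 hm19 (by norm_num); norm_num at this; exact this
    exact absurd (hC5 13 (by norm_num) hm13 (by norm_num; exact hm14)) (fun h => h)

end Arith


/-- The largest size of a partition in `DS(t)`: `m(1) = 0`, `m(2) = 1`, and
`m(t) = 2t - 1` for `3 ≤ t ≤ 5`. -/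
theorem largest_size_inDS_small :
    IsGreatest {n : ℕ | ∃ lam : IntPartition, lam.InDS 1 ∧ lam.size = n} 0 ∧
    IsGreatest {n : ℕ | ∃ lam : IntPartition, lam.InDS 2 ∧ lam.size = n} 1 ∧
    ∀ t : ℕ, 3 ≤ t → t ≤ 5 →
      IsGreatest {n : ℕ | ∃ lam : IntPartition, lam.InDS t ∧ lam.size = n}
        (2 * t - 1) := by
  refine ⟨⟨⟨IntPartition.stair 0, IntPartition.stair_zero_inDS1, IntPartition.stair_zero_size⟩, ?_⟩,
    ⟨⟨IntPartition.stair 1, IntPartition.stair_one_inDS2, by rw [IntPartition.stair_size 1 le_rfl]⟩, ?_⟩, ?_⟩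
  · -- upper bound for t = 1
    rintro n ⟨lam, hds, rfl⟩
    have hp0 : lam.parts 0 = 0 := by
      by_contra h
      exact hds.2.1 0 0 (Nat.pos_of_ne_zero h) (one_dvd _)
    rw [lam.size_eq_zero' hp0]
  · -- upper bound for t = 2
    rintro n ⟨lam, hds, rfl⟩
    rcases Nat.eq_zero_or_pos (lam.parts 0) with h0 | h0
    · rw [lam.size_eq_zero' h0]; omega
    · obtain ⟨F, hcard, hmem, hbnd, hs1, hs2, hdvd, hC4, hC5, hsum⟩ := lam.exists_F 2 hds h0
      exact arith2 F (lam.parts 0) lam.size hcard h0 hmem hbnd hs1 hs2 hdvd hC4 hC5 hsum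
  · intro t ht1 ht2
    interval_cases t
    · refine ⟨⟨IntPartition.stair 3, IntPartition.stair_inDS 3 le_rfl,
        by rw [IntPartition.stair_size 3 (by norm_num)]⟩, ?_⟩
      rintro n ⟨lam, hds, rfl⟩
      rcases Nat.eq_zero_or_pos (lam.parts 0) with h0 | h0
      · rw [lam.size_eq_zero' h0]; omega
      · obtain ⟨F, hcard, hmem, hbnd, hs1, hs2, hdvd, hC4, hC5, hsum⟩ := lam.exists_F 3 hds h0
        have := arith3 F (lam.parts 0) lam.size hcard h0 hmem hbnd hs1 hs2 hdvd hC4 hC5 hsum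
        omega
    · refine ⟨⟨IntPartition.stair 4, IntPartition.stair_inDS 4 (by norm_num),
        by rw [IntPartition.stair_size 4 (by norm_num)]⟩, ?_⟩
      rintro n ⟨lam, hds, rfl⟩
      rcases Nat.eq_zero_or_pos (lam.parts 0) with h0 | h0
      · rw [lam.size_eq_zero' h0]; omega
      · obtain ⟨F, hcard, hmem, hbnd, hs1, hs2, hdvd, hC4, hC5, hsum⟩ := lam.exists_F 4 hds h0
        have := arith4 F (lam.parts 0) lam.size hcard h0 hmem hbnd hs1 hs2 hdvd hC4 hC5 hsum
        omega
    · refine ⟨⟨IntPartition.stair 5, IntPartition.stair_inDS 5 (by norm_num),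
        by rw [IntPartition.stair_size 5 (by norm_num)]⟩, ?_⟩
      rintro n ⟨lam, hds, rfl⟩
      rcases Nat.eq_zero_or_pos (lam.parts 0) with h0 | h0
      · rw [lam.size_eq_zero' h0]; omega
      · obtain ⟨F, hcard, hmem, hbnd, hs1, hs2, hdvd, hC4, hC5, hsum⟩ := lam.exists_F 5 hds h0
        have := arith5 F (lam.parts 0) lam.size hcard h0 hmem hbnd hs1 hs2 hdvd hC4 hC5 hsum
        omega
end
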